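/- arXiv:1410.1016 — 7 statements merged into one kernel-verified Lean document; each statement's English description precedes it below -/
import Mathlib

section
/- Let H be a graph with vertex subsets S1, T1, S2, T2 of k vertices each, all vertices distinct and of degree 1 in H. Suppose (S1,T1) is routed by a unique set R of k vertex-disjoint paths (the red paths), (S2,T2) is routed by a unique set B of k vertex-disjoint paths (the blue paths), every edge of H lies on exactly one path of R ∪ B, and every vertex of H not in S1∪T1∪S2∪T2 lies on exactly one red path and exactly one blue path. Orient red paths from S1 to T1 and blue paths from S2 to T2, yielding a directed graph H̃. Then H̃ contains no blue cycle, where a blue cycle is a simple directed cycle partitioned into 2r edge-disjoint consecutive segments (r ≥ 1) alternating between single red edges and nonempty all-blue paths. -/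
/-- `pathRel P u v`: `(u,v)` is a (directed) edge of one of the paths `P i`,
i.e. `u` immediately precedes `v` on some path. -/
def pathRel {V : Type} {k : ℕ} (P : Fin k → List V) (u v : V) : Prop :=
  ∃ i, [u, v] <:+: P i

/-- The undirected adjacency of the graph `H` formed by the union of the red paths `R`
and the blue paths `B`. -/
def undirAdj {V : Type} {k l : ℕ} (R : Fin k → List V) (B : Fin l → List V)
    (u v : V) : Prop :=
  pathRel R u v ∨ pathRel R v u ∨ pathRel B u v ∨ pathRel B v u

/-- The setup of the minimal two-commodity routing graph `H`: red paths `R` route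
`(S1,T1)`, blue paths `B` route `(S2,T2)`, each of size `k`; the four terminal sets are
disjoint and their vertices have degree 1 in `H`; every edge of `H` lies on exactly one
path of `R ∪ B`; every non-terminal vertex lies on one red and one blue path; `R` and `B`
are the unique routings of their respective pairs in `H`. -/
structure TwoCommodity (V : Type) (k : ℕ) where
  S1 : Set V
  T1 : Set V
  S2 : Set V
  T2 : Set V
  R : Fin k → List V
  B : Fin k → List V
  cardS1 : S1.ncard = k
  cardT1 : T1.ncard = k
  cardS2 : S2.ncard = k
  cardT2 : T2.ncard = k
  distinct : ∀ i j : Fin 4, i ≠ j → Disjoint (![S1, T1, S2, T2] i) (![S1, T1, S2, T2] j)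
  Rne : ∀ i, R i ≠ []
  Rnd : ∀ i, (R i).Nodup
  Rdisj : ∀ i j, i ≠ j → ∀ v, v ∈ R i → v ∉ R j
  Rheads : S1 = {v | ∃ i, (R i).head? = some v}
  Rlasts : T1 = {v | ∃ i, (R i).getLast? = some v}
  Bne : ∀ i, B i ≠ []
  Bnd : ∀ i, (B i).Nodup
  Bdisj : ∀ i j, i ≠ j → ∀ v, v ∈ B i → v ∉ B j
  Bheads : S2 = {v | ∃ i, (B i).head? = some v}
  Blasts : T2 = {v | ∃ i, (B i).getLast? = some v}
  /-- no edge is both red and blue -/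
  edgeDisj : ∀ u v, (pathRel R u v ∨ pathRel R v u) → ¬ (pathRel B u v ∨ pathRel B v u)
  /-- terminals have degree 1 in `H` -/
  degOne : ∀ t ∈ S1 ∪ T1 ∪ S2 ∪ T2, ∃! v, undirAdj R B t v
  /-- every non-terminal vertex lies on a red path and on a blue path -/
  cover : ∀ v, v ∉ S1 ∪ T1 ∪ S2 ∪ T2 → (∃ i, v ∈ R i) ∧ (∃ j, v ∈ B j)
  /-- `R` is the unique set of `k` disjoint paths of `H` routing `(S1,T1)` -/
  Runiq : ∀ R' : Fin k → List V,
    (∀ i, R' i ≠ [] ∧ (R' i).Nodup ∧ (R' i).Chain' (undirAdj R B)) →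
    (∀ i j, i ≠ j → ∀ v, v ∈ R' i → v ∉ R' j) →
    S1 = {v | ∃ i, (R' i).head? = some v} →
    T1 = {v | ∃ i, (R' i).getLast? = some v} →
    ∀ l, (∃ i, R' i = l) ↔ (∃ i, R i = l)
  /-- `B` is the unique set of `k` disjoint paths of `H` routing `(S2,T2)` -/
  Buniq : ∀ B' : Fin k → List V,
    (∀ i, B' i ≠ [] ∧ (B' i).Nodup ∧ (B' i).Chain' (undirAdj R B)) →
    (∀ i j, i ≠ j → ∀ v, v ∈ B' i → v ∉ B' j) →
    S2 = {v | ∃ i, (B' i).head? = some v} →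
    T2 = {v | ∃ i, (B' i).getLast? = some v} →
    ∀ l, (∃ i, B' i = l) ↔ (∃ i, B i = l)

/-- A "blue cycle" in the directed graph with edge relations `red`, `blue`: a simple
directed cycle consisting of an alternation of single red edges and nonempty all-blue
directed subpaths (equivalently: a simple directed cycle all of whose edges are red or
blue, containing at least one red edge, and with no two consecutive red edges). -/
def BlueCycle {V : Type} (red blue : V → V → Prop) : Prop :=
  ∃ (m : ℕ) (f : ZMod m → V), 2 ≤ m ∧ Function.Injective f ∧
    (∀ i : ZMod m, red (f i) (f (i + 1)) ∨ blue (f i) (f (i + 1))) ∧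
    (∃ i : ZMod m, red (f i) (f (i + 1))) ∧
    (∀ i : ZMod m, ¬ (red (f i) (f (i + 1)) ∧ red (f (i + 1)) (f (i + 2))))

/-- A red cycle is a blue cycle with the roles of the colors exchanged. -/
def RedCycle {V : Type} (red blue : V → V → Prop) : Prop :=
  BlueCycle blue red


namespace NoBlueAux
open List Function

open List

/-- C3: in a nodup list, the head has no predecessor. -/
lemma not_infix_head {α : Type} {l : List α} {u w : α}
    (hnd : l.Nodup) (hh : l.head? = some u) (h : [w, u] <:+: l) : False := by
  cases l with
  | nil => simp at hh
  | cons a t =>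
    simp only [head?_cons, Option.some_inj] at hh
    have hmem : u ∈ t := by
      rcases List.infix_cons_iff.mp h with hp | hi
      · rcases List.cons_prefix_cons.mp hp with ⟨h1, hp2⟩
        rcases hp2 with ⟨r, hr⟩
        rw [← hr]; simp
      · exact hi.mem (by simp)
    rw [← hh] at hmem
    exact (List.nodup_cons.mp hnd).1 hmem

/-- C4: in a nodup list, the last element has no successor. -/
lemma not_infix_getLast {α : Type} {l : List α} {u v : α}
    (hnd : l.Nodup) (hh : l.getLast? = some u) (h : [u, v] <:+: l) : False := by
  obtain ⟨s, t, hst⟩ := h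
  have hst' : s ++ u :: v :: t = l := by simpa using hst
  subst hst'
  rw [List.getLast?_append] at hh
  have h2 : (u :: v :: t).getLast? = some u := by
    cases ht : (u :: v :: t).getLast? with
    | none => simp at ht
    | some b => rw [ht] at hh; simp at hh; subst hh; rfl
  rw [List.getLast?_cons_cons] at h2
  have hmem : u ∈ v :: t := List.mem_of_mem_getLast? (by rw [h2]; rfl)
  have hnd2 : (u :: (v :: t)).Nodup :=
    ((List.sublist_append_right s (u :: v :: t))).nodup hnd
  exact (List.nodup_cons.mp hnd2).1 hmem

/-- C1: successor is unique in a nodup list. -/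
lemma infix_pair_right_unique {α : Type} {l : List α} {u v w : α}
    (hnd : l.Nodup) (h1 : [u, v] <:+: l) (h2 : [u, w] <:+: l) : v = w := by
  induction l with
  | nil => exact absurd (h1.sublist.length_le) (by simp)
  | cons a t ih =>
    have hnd' := (List.nodup_cons.mp hnd)
    rcases List.infix_cons_iff.mp h1 with hp1 | hi1 <;>
      rcases List.infix_cons_iff.mp h2 with hp2 | hi2
    · rcases List.cons_prefix_cons.mp hp1 with ⟨hu1, hp1'⟩
      rcases List.cons_prefix_cons.mp hp2 with ⟨hu2, hp2'⟩
      rcases hp1' with ⟨r1, hr1⟩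
      rcases hp2' with ⟨r2, hr2⟩
      have e1 : t.head? = some v := by rw [← hr1]; simp
      have e2 : t.head? = some w := by rw [← hr2]; simp
      rw [e1] at e2; exact (Option.some_inj.mp e2)
    · rcases List.cons_prefix_cons.mp hp1 with ⟨hu1, -⟩
      rw [← hu1] at hnd'
      exact absurd (hi2.mem (by simp)) hnd'.1
    · rcases List.cons_prefix_cons.mp hp2 with ⟨hu2, -⟩
      rw [← hu2] at hnd'
      exact absurd (hi1.mem (by simp)) hnd'.1
    · exact ih hnd'.2 hi1 hi2

/-- C2: predecessor is unique in a nodup list. -/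
lemma infix_pair_left_unique {α : Type} {l : List α} {u v w : α}
    (hnd : l.Nodup) (h1 : [u, v] <:+: l) (h2 : [w, v] <:+: l) : u = w := by
  induction l with
  | nil => exact absurd (h1.sublist.length_le) (by simp)
  | cons a t ih =>
    have hnd' := (List.nodup_cons.mp hnd)
    rcases List.infix_cons_iff.mp h1 with hp1 | hi1 <;>
      rcases List.infix_cons_iff.mp h2 with hp2 | hi2
    · rcases List.cons_prefix_cons.mp hp1 with ⟨hu1, -⟩
      rcases List.cons_prefix_cons.mp hp2 with ⟨hu2, -⟩
      rw [hu1, hu2]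
    · rcases List.cons_prefix_cons.mp hp1 with ⟨hu1, hp1'⟩
      rcases hp1' with ⟨r1, hr1⟩
      have hht : t.head? = some v := by rw [← hr1]; simp
      exact absurd (not_infix_head hnd'.2 hht hi2) (by simp)
    · rcases List.cons_prefix_cons.mp hp2 with ⟨hu2, hp2'⟩
      rcases hp2' with ⟨r1, hr1⟩
      have hht : t.head? = some v := by rw [← hr1]; simp
      exact absurd (not_infix_head hnd'.2 hht hi1) (by simp)
    · exact ih hnd'.2 hi1 hi2

/-- C5: a member which is not the last has a successor. -/
lemma exists_succ_of_mem {α : Type} {l : List α} {u : α}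
    (hm : u ∈ l) (hl : l.getLast? ≠ some u) : ∃ v, [u, v] <:+: l := by
  obtain ⟨s, t, rfl⟩ := List.append_of_mem hm
  cases t with
  | nil => exact absurd (by simp [List.getLast?_concat]) hl
  | cons v t' => exact ⟨v, ⟨s, t', by simp⟩⟩

/-- C6: a member which is not the head has a predecessor. -/
lemma exists_pred_of_mem {α : Type} {l : List α} {u : α}
    (hm : u ∈ l) (hl : l.head? ≠ some u) : ∃ w, [w, u] <:+: l := by
  obtain ⟨s, t, rfl⟩ := List.append_of_mem hm
  rcases List.eq_nil_or_concat s with rfl | ⟨s', w, rfl⟩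
  · exact absurd (by simp) hl
  · exact ⟨w, ⟨s', t, by simp [List.concat_eq_append]⟩⟩

variable {V : Type} {k : ℕ}

lemma pathRel_mem_left {P : Fin k → List V} {u v : V} (h : pathRel P u v) :
    ∃ i, u ∈ P i := by
  obtain ⟨i, hi⟩ := h; exact ⟨i, hi.mem (by simp)⟩

lemma pathRel_mem_right {P : Fin k → List V} {u v : V} (h : pathRel P u v) :
    ∃ i, v ∈ P i := by
  obtain ⟨i, hi⟩ := h; exact ⟨i, hi.mem (by simp)⟩

/-- G1 : blue successor is unique -/
lemma blue_succ_unique (C : TwoCommodity V k) {u v w : V}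
    (h1 : pathRel C.B u v) (h2 : pathRel C.B u w) : v = w := by
  obtain ⟨i, hi⟩ := h1
  obtain ⟨j, hj⟩ := h2
  have hij : i = j := by
    by_contra hne
    exact C.Bdisj i j hne u (hi.mem (by simp)) (hj.mem (by simp))
  subst hij
  exact infix_pair_right_unique (C.Bnd i) hi hj

/-- G2 : blue predecessor is unique -/
lemma blue_pred_unique (C : TwoCommodity V k) {u v w : V}
    (h1 : pathRel C.B u v) (h2 : pathRel C.B w v) : u = w := by
  obtain ⟨i, hi⟩ := h1
  obtain ⟨j, hj⟩ := h2
  have hij : i = j := by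
    by_contra hne
    exact C.Bdisj i j hne v (hi.mem (by simp)) (hj.mem (by simp))
  subst hij
  exact infix_pair_left_unique (C.Bnd i) hi hj

/-- P1 : a blue-path vertex not in T2 has a blue successor. -/
lemma blue_succ_exists (C : TwoCommodity V k) {u : V} {j : Fin k}
    (hm : u ∈ C.B j) (ht : u ∉ C.T2) : ∃ v, pathRel C.B u v := by
  have hlast : (C.B j).getLast? ≠ some u := by
    intro h
    exact ht (by rw [C.Blasts]; exact ⟨j, h⟩)
  obtain ⟨v, hv⟩ := exists_succ_of_mem hm hlast
  exact ⟨v, j, hv⟩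

/-- a blue-path vertex not in S2 has a blue predecessor. -/
lemma blue_pred_exists (C : TwoCommodity V k) {u : V} {j : Fin k}
    (hm : u ∈ C.B j) (ht : u ∉ C.S2) : ∃ w, pathRel C.B w u := by
  have hh : (C.B j).head? ≠ some u := by
    intro h
    exact ht (by rw [C.Bheads]; exact ⟨j, h⟩)
  obtain ⟨w, hw⟩ := exists_pred_of_mem hm hh
  exact ⟨w, j, hw⟩

/-- an S2 vertex has no blue predecessor. -/
lemma no_blue_pred_of_S2 (C : TwoCommodity V k) {s w : V}
    (hs : s ∈ C.S2) (h : pathRel C.B w s) : False := by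
  rw [C.Bheads] at hs
  obtain ⟨j0, hj0⟩ := hs
  obtain ⟨j1, hj1⟩ := h
  have hj : j0 = j1 := by
    by_contra hne
    exact C.Bdisj j0 j1 hne s (List.mem_of_mem_head? (by rw [hj0]; rfl)) (hj1.mem (by simp))
  subst hj
  exact not_infix_head (C.Bnd j0) hj0 hj1

/-- a T2 vertex has no blue successor. -/
lemma no_blue_succ_of_T2 (C : TwoCommodity V k) {t v : V}
    (ht : t ∈ C.T2) (h : pathRel C.B t v) : False := by
  rw [C.Blasts] at ht
  obtain ⟨j0, hj0⟩ := ht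
  obtain ⟨j1, hj1⟩ := h
  have hj : j0 = j1 := by
    by_contra hne
    exact C.Bdisj j0 j1 hne t (List.mem_of_mem_getLast? (by rw [hj0]; rfl)) (hj1.mem (by simp))
  subst hj
  exact not_infix_getLast (C.Bnd j0) hj0 hj1

/-- a vertex with two distinct neighbours is not a terminal. -/
lemma nonterminal_of_two_nbrs (C : TwoCommodity V k) {u a b : V}
    (hab : a ≠ b) (ha : undirAdj C.R C.B u a) (hb : undirAdj C.R C.B u b) :
    u ∉ C.S1 ∪ C.T1 ∪ C.S2 ∪ C.T2 := by
  intro hu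
  obtain ⟨v, -, huniq⟩ := C.degOne u hu
  exact hab ((huniq a ha).trans (huniq b hb).symm)

lemma S2_disj_T2 (C : TwoCommodity V k) : Disjoint C.S2 C.T2 := by
  have := C.distinct 2 3 (by decide)
  simpa using this

lemma S2_sub_terms (C : TwoCommodity V k) {s : V} (hs : s ∈ C.S2) :
    s ∈ C.S1 ∪ C.T1 ∪ C.S2 ∪ C.T2 := by
  left; right; exact hs

lemma T2_sub_terms (C : TwoCommodity V k) {s : V} (hs : s ∈ C.T2) :
    s ∈ C.S1 ∪ C.T1 ∪ C.S2 ∪ C.T2 := by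
  right; exact hs


open List Function

variable {V : Type}

/-- one step on `Option V`. -/
def ostep (g : V → Option V) (o : Option V) : Option V := o.bind g

def orb (g : V → Option V) : ℕ → V → List V
  | 0, x => [x]
  | n+1, x =>
    match g x with
    | none => [x]
    | some y => x :: orb g n y

lemma orb_ne {g : V → Option V} : ∀ n x, orb g n x ≠ [] := by
  intro n x
  cases n with
  | zero => simp [orb]
  | succ n => cases h : g x <;> simp [orb, h]

lemma orb_head? {g : V → Option V} : ∀ n x, (orb g n x).head? = some x := by
  intro n x
  cases n with
  | zero => simp [orb]
  | succ n => cases h : g x <;> simp [orb, h]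

lemma ostep_none {g : V → Option V} : ∀ n, (ostep g)^[n] none = none := by
  intro n
  induction n with
  | zero => rfl
  | succ n ih => rw [Function.iterate_succ_apply, show ostep g none = none from rfl, ih]

lemma ostep_some {g : V → Option V} {x : V} : ostep g (some x) = g x := rfl

lemma ostep_succ_some {g : V → Option V} {n : ℕ} {o : Option V} {c : V}
    (h : (ostep g)^[n+1] o = some c) : ∃ w, (ostep g)^[n] o = some w ∧ g w = some c := by
  rw [Function.iterate_succ_apply'] at h
  cases ho : (ostep g)^[n] o with
  | none => rw [ho] at h; exact absurd h (by simp [ostep])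
  | some w => rw [ho] at h; exact ⟨w, rfl, h⟩

lemma orb_chain {g : V → Option V} {adj : V → V → Prop}
    (hadj : ∀ a b, g a = some b → adj a b) : ∀ n x, (orb g n x).Chain' adj := by
  intro n
  induction n with
  | zero => intro x; simp [orb, List.Chain', List.isChain_singleton]
  | succ n ih =>
    intro x
    cases h : g x with
    | none => simp [orb, h, List.Chain', List.isChain_singleton]
    | some y =>
      rw [show orb g (n+1) x = x :: orb g n y by simp [orb, h]]
      simp only [List.Chain', List.isChain_cons]
      exact ⟨fun b hb => by rw [orb_head? n y] at hb; cases hb; exact hadj x y h, ih y⟩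

lemma orb_mem {g : V → Option V} : ∀ n x a, a ∈ orb g n x →
    ∃ j, j ≤ n ∧ (ostep g)^[j] (some x) = some a := by
  intro n
  induction n with
  | zero =>
    intro x a ha
    simp [orb] at ha
    exact ⟨0, le_refl 0, by simp [ha]⟩
  | succ n ih =>
    intro x a ha
    cases h : g x with
    | none =>
      rw [show orb g (n+1) x = [x] by simp [orb, h]] at ha
      simp at ha
      exact ⟨0, by omega, by simp [ha]⟩
    | some y =>
      rw [show orb g (n+1) x = x :: orb g n y by simp [orb, h]] at ha
      rcases List.mem_cons.mp ha with rfl | ha'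
      · exact ⟨0, by omega, rfl⟩
      · obtain ⟨j, hj, hstep⟩ := ih y a ha'
        exact ⟨j+1, by omega, by
          rw [Function.iterate_succ_apply, ostep_some, h]; exact hstep⟩

lemma orb_pair {g : V → Option V} : ∀ n x {a b : V}, [a, b] <:+: orb g n x →
    g a = some b := by
  intro n
  induction n with
  | zero =>
    intro x a b h
    have := h.sublist.length_le
    simp [orb] at this
  | succ n ih =>
    intro x a b h
    cases hgx : g x with
    | none =>
      rw [show orb g (n+1) x = [x] by simp [orb, hgx]] at h
      have := h.sublist.length_le
      simp at this
    | some y =>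
      rw [show orb g (n+1) x = x :: orb g n y by simp [orb, hgx]] at h
      rcases List.infix_cons_iff.mp h with hp | hi
      · rcases List.cons_prefix_cons.mp hp with ⟨rfl, hp2⟩
        obtain ⟨r, hr⟩ := hp2
        have : (orb g n y).head? = some b := by rw [← hr]; simp
        rw [orb_head? n y] at this
        cases this
        exact hgx
      · exact ih y hi

lemma orb_getLast_none {g : V → Option V} : ∀ n x,
    (ostep g)^[n] (some x) = none → g ((orb g n x).getLast (orb_ne n x)) = none := by
  intro n
  induction n with
  | zero => intro x h; simp at h
  | succ n ih =>
    intro x h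
    cases hgx : g x with
    | none =>
      have he : orb g (n+1) x = [x] := by simp [orb, hgx]
      rw [List.getLast_congr _ (by simp) he]
      simpa using hgx
    | some y =>
      have he : orb g (n+1) x = x :: orb g n y := by simp [orb, hgx]
      have h' : (ostep g)^[n] (some y) = none := by
        rw [Function.iterate_succ_apply, ostep_some, hgx] at h; exact h
      have := ih y h'
      rw [show (orb g (n+1) x).getLast (orb_ne _ _) = (orb g n y).getLast (orb_ne n y) from ?_]
      · exact this
      · rw [List.getLast_congr _ _ he]
        exact List.getLast_cons (orb_ne n y)


section Inj
variable {g : V → Option V} (INJ : ∀ a b c, g a = some c → g b = some c → a = b)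
include INJ

/-- no collisions along an orbit started outside the image of `g`. -/
lemma iter_ne (hx : ∀ w, g w ≠ some x) :
    ∀ i d a, (ostep g)^[i] (some x) = some a →
      (ostep g)^[i + (d+1)] (some x) = some a → False := by
  intro i
  induction i with
  | zero =>
    intro d a h1 h2
    cases h1
    obtain ⟨w, -, hw⟩ := ostep_succ_some h2
    exact hx w hw
  | succ i ih =>
    intro d a h1 h2
    obtain ⟨b, hb, hgb⟩ := ostep_succ_some h1
    have h2' : (ostep g)^[(i + (d+1)) + 1] (some x) = some a := by
      rw [show (i + (d+1)) + 1 = (i+1) + (d+1) by omega]; exact h2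
    obtain ⟨c, hc, hgc⟩ := ostep_succ_some h2'
    cases INJ b c a hgb hgc
    exact ih d b hb hc

lemma iter_inj_strong (hx : ∀ w, g w ≠ some x) :
    ∀ i j a, i ≠ j → (ostep g)^[i] (some x) = some a →
      (ostep g)^[j] (some x) = some a → False := by
  intro i j a hne h1 h2
  rcases Nat.lt_or_ge i j with h | h
  · exact iter_ne INJ hx i (j - i - 1) a h1 (by rw [show i + (j-i-1+1) = j by omega]; exact h2)
  · have h' : j < i := by omega
    exact iter_ne INJ hx j (i - j - 1) a h2 (by rw [show j + (i-j-1+1) = i by omega]; exact h1)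

/-- halting within `Fintype.card V` steps. -/
lemma exists_halt [Fintype V] (hx : ∀ w, g w ≠ some x) :
    (ostep g)^[Fintype.card V] (some x) = none := by
  by_contra hne
  have hall : ∀ j, j ≤ Fintype.card V → (ostep g)^[j] (some x) ≠ none := by
    intro j hj h
    apply hne
    rw [show Fintype.card V = (Fintype.card V - j) + j by omega,
      Function.iterate_add_apply, h, ostep_none]
  have hch : ∀ j : Fin (Fintype.card V + 1), ∃ a, (ostep g)^[(j:ℕ)] (some x) = some a := by
    intro j
    rcases ho : (ostep g)^[(j:ℕ)] (some x) with _ | a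
    · exact absurd ho (hall j (by omega))
    · exact ⟨a, rfl⟩
  choose F hF using hch
  have hFinj : Function.Injective F := by
    intro j1 j2 he
    by_contra hne2
    exact iter_inj_strong INJ hx (j1:ℕ) (j2:ℕ) (F j1)
      (fun h => hne2 (Fin.ext h)) (hF j1) (he ▸ hF j2)
  have := Fintype.card_le_of_injective F hFinj
  simp at this

/-- orbits started at distinct non-image points are disjoint. -/
lemma iter_disj (hx : ∀ w, g w ≠ some x) (hy : ∀ w, g w ≠ some y) (hxy : x ≠ y) :
    ∀ i j a, (ostep g)^[i] (some x) = some a → (ostep g)^[j] (some y) = some a → False := by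
  intro i
  induction i with
  | zero =>
    intro j a h1 h2
    cases h1
    cases j with
    | zero => exact hxy (by cases h2; rfl)
    | succ j =>
      obtain ⟨w, -, hw⟩ := ostep_succ_some h2
      exact hx w hw
  | succ i ih =>
    intro j a h1 h2
    cases j with
    | zero =>
      cases h2
      obtain ⟨w, -, hw⟩ := ostep_succ_some h1
      exact hy w hw
    | succ j =>
      obtain ⟨b, hb, hgb⟩ := ostep_succ_some h1
      obtain ⟨c, hc, hgc⟩ := ostep_succ_some h2
      cases INJ b c a hgb hgc
      exact ih j b hb hc

lemma orb_disjoint [Fintype V] (hx : ∀ w, g w ≠ some x) (hy : ∀ w, g w ≠ some y)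
    (hxy : x ≠ y) {n n' : ℕ} {a : V} (ha : a ∈ orb g n x) (hb : a ∈ orb g n' y) : False := by
  obtain ⟨i, -, hi⟩ := orb_mem n x a ha
  obtain ⟨j, -, hj⟩ := orb_mem n' y a hb
  exact iter_disj INJ hx hy hxy i j a hi hj

omit INJ in
/-- nodup for orbits. -/
lemma orb_nodup' :
    ∀ n x, (∀ i j a, i ≠ j → (ostep g)^[i] (some x) = some a →
      (ostep g)^[j] (some x) = some a → False) → (orb g n x).Nodup := by
  intro n
  induction n with
  | zero => intro x _; simp [orb]
  | succ n ih =>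
    intro x hx
    cases hgx : g x with
    | none => rw [show orb g (n+1) x = [x] by simp [orb, hgx]]; simp
    | some y =>
      rw [show orb g (n+1) x = x :: orb g n y by simp [orb, hgx]]
      rw [List.nodup_cons]
      constructor
      · intro hmem
        obtain ⟨j, -, hj⟩ := orb_mem n y x hmem
        have : (ostep g)^[j+1] (some x) = some x := by
          rw [Function.iterate_succ_apply, ostep_some, hgx]; exact hj
        exact hx 0 (j+1) x (by omega) rfl this
      · apply ih
        intro i j a hne h1 h2
        have s1 : (ostep g)^[i+1] (some x) = some a := by
          rw [Function.iterate_succ_apply, ostep_some, hgx]; exact h1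
        have s2 : (ostep g)^[j+1] (some x) = some a := by
          rw [Function.iterate_succ_apply, ostep_some, hgx]; exact h2
        exact hx (i+1) (j+1) a (by omega) s1 s2

lemma orb_nodup (hx : ∀ w, g w ≠ some x) (n : ℕ) : (orb g n x).Nodup :=
  orb_nodup' n x (fun i j a hne h1 h2 => iter_inj_strong INJ hx i j a hne h1 h2)

end Inj


/-! ### The rerouting function `sig` -/

section Sig

variable {V : Type} {k : ℕ} {m : ℕ}

/-- the `i`-th edge of the cycle is red -/
def RedE (C : TwoCommodity V k) (f : ZMod m → V) (i : ZMod m) : Prop :=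
  pathRel C.R (f i) (f (i + 1))

open scoped Classical in
/-- blue successor -/
noncomputable def bsucc (C : TwoCommodity V k) (x : V) : Option V :=
  if h : ∃ v, pathRel C.B x v then some h.choose else none

lemma bsucc_some_elim {C : TwoCommodity V k} {x v : V}
    (h : bsucc C x = some v) : pathRel C.B x v := by
  classical
  unfold bsucc at h
  by_cases h1 : ∃ w, pathRel C.B x w
  · rw [dif_pos h1] at h
    exact (Option.some_inj.mp h) ▸ h1.choose_spec
  · rw [dif_neg h1] at h
    exact absurd h (by simp)

lemma bsucc_eq_some {C : TwoCommodity V k} {x v : V}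
    (h : pathRel C.B x v) : bsucc C x = some v := by
  classical
  unfold bsucc
  rw [dif_pos ⟨v, h⟩]
  exact congrArg some (blue_succ_unique C (Exists.choose_spec (⟨v, h⟩ : ∃ w, pathRel C.B x w)) h)

lemma bsucc_none_elim {C : TwoCommodity V k} {x : V}
    (h : bsucc C x = none) : ∀ v, ¬ pathRel C.B x v := by
  classical
  unfold bsucc at h
  by_cases h1 : ∃ w, pathRel C.B x w
  · rw [dif_pos h1] at h
    exact absurd h (by simp)
  · exact fun v hv => h1 ⟨v, hv⟩

open scoped Classical in
/-- the rerouted successor function -/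
noncomputable def sig (C : TwoCommodity V k) (f : ZMod m → V) (x : V) : Option V :=
  if h : ∃ i, RedE C f i ∧ x = f (i + 1) then some (f h.choose)
  else if (∃ i, ¬ RedE C f i ∧ x = f i) then none
  else bsucc C x

lemma sig_some_elim {C : TwoCommodity V k} {f : ZMod m → V} {x z : V}
    (h : sig C f x = some z) :
    (∃ i, RedE C f i ∧ x = f (i + 1) ∧ z = f i) ∨
    ((∀ i, ¬ (RedE C f i ∧ x = f (i + 1))) ∧ (∀ i, ¬ (¬ RedE C f i ∧ x = f i)) ∧
      pathRel C.B x z) := by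
  classical
  unfold sig at h
  by_cases h1 : ∃ i, RedE C f i ∧ x = f (i + 1)
  · rw [dif_pos h1] at h
    obtain ⟨hr, he⟩ := h1.choose_spec
    exact Or.inl ⟨h1.choose, hr, he, (Option.some_inj.mp h).symm⟩
  · rw [dif_neg h1] at h
    by_cases h2 : ∃ i, ¬ RedE C f i ∧ x = f i
    · rw [if_pos h2] at h
      exact absurd h (by simp)
    · rw [if_neg h2] at h
      exact Or.inr ⟨fun i hi => h1 ⟨i, hi⟩, fun i hi => h2 ⟨i, hi⟩, bsucc_some_elim h⟩

lemma sig_none_elim {C : TwoCommodity V k} {f : ZMod m → V} {x : V}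
    (h : sig C f x = none) :
    ((∀ i, ¬ (RedE C f i ∧ x = f (i + 1))) ∧ ∃ i, ¬ RedE C f i ∧ x = f i) ∨
    ((∀ i, ¬ (RedE C f i ∧ x = f (i + 1))) ∧ (∀ i, ¬ (¬ RedE C f i ∧ x = f i)) ∧
      bsucc C x = none) := by
  classical
  unfold sig at h
  by_cases h1 : ∃ i, RedE C f i ∧ x = f (i + 1)
  · rw [dif_pos h1] at h
    exact absurd h (by simp)
  · rw [dif_neg h1] at h
    by_cases h2 : ∃ i, ¬ RedE C f i ∧ x = f i
    · exact Or.inl ⟨fun i hi => h1 ⟨i, hi⟩, h2⟩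
    · rw [if_neg h2] at h
      exact Or.inr ⟨fun i hi => h1 ⟨i, hi⟩, fun i hi => h2 ⟨i, hi⟩, h⟩

lemma sig_red {C : TwoCommodity V k} {f : ZMod m → V} (hinj : Function.Injective f)
    {i : ZMod m} (hred : RedE C f i) : sig C f (f (i + 1)) = some (f i) := by
  classical
  unfold sig
  rw [dif_pos ⟨i, hred, rfl⟩]
  congr 1
  have hch := (⟨i, hred, rfl⟩ : ∃ j, RedE C f j ∧ f (i+1) = f (j+1)).choose_spec
  have : i = (⟨i, hred, rfl⟩ : ∃ j, RedE C f j ∧ f (i+1) = f (j+1)).choose := by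
    have := hinj hch.2
    exact add_right_cancel this
  rw [← this]

section Cycle

variable {C : TwoCommodity V k} {f : ZMod m → V}
  (hm3 : 3 ≤ m) (hinj : Function.Injective f)
  (hcol : ∀ i, RedE C f i ∨ pathRel C.B (f i) (f (i + 1)))
  (hno : ∀ i : ZMod m, ¬ (pathRel C.R (f i) (f (i + 1)) ∧ pathRel C.R (f (i + 1)) (f (i + 2))))

include hm3 in
lemma two_ne : (2 : ZMod m) ≠ 0 := by
  haveI : NeZero m := ⟨by omega⟩
  intro h2
  have : ((2 : ℕ) : ZMod m) = 0 := by push_cast; exact h2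
  have := (ZMod.natCast_eq_zero_iff 2 m).mp this
  have := Nat.le_of_dvd (by norm_num) this
  omega

include hno in
lemma red_not_next {i : ZMod m} (hred : RedE C f i) : ¬ RedE C f (i + 1) := by
  intro h
  have e : i + 1 + 1 = i + 2 := by ring
  exact hno i ⟨hred, by rw [← e]; exact h⟩

include hno in
lemma red_not_prev {i : ZMod m} (hred : RedE C f i) : ¬ RedE C f (i - 1) := by
  intro h
  have e1 : i - 1 + 1 = i := by ring
  have e2 : i - 1 + 2 = i + 1 := by ring
  have hthis := hno (i - 1)
  rw [e1, e2] at hthis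
  have h' : pathRel C.R (f (i - 1)) (f (i - 1 + 1)) := h
  rw [e1] at h'
  exact hthis ⟨h', hred⟩

include hcol in
lemma blueE {i : ZMod m} (h : ¬ RedE C f i) : pathRel C.B (f i) (f (i + 1)) :=
  (hcol i).resolve_left h

include hm3 hinj hcol in
lemma cyc_nonterm (i : ZMod m) : f i ∉ C.S1 ∪ C.T1 ∪ C.S2 ∪ C.T2 := by
  haveI : NeZero m := ⟨by omega⟩
  have hne : f (i + 1) ≠ f (i - 1) := by
    intro h
    have := hinj h
    exact two_ne hm3 (by linear_combination this)
  have ha : undirAdj C.R C.B (f i) (f (i + 1)) := by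
    rcases hcol i with h | h
    · exact Or.inl h
    · exact Or.inr (Or.inr (Or.inl h))
  have hb : undirAdj C.R C.B (f i) (f (i - 1)) := by
    have e : i - 1 + 1 = i := by ring
    rcases hcol (i - 1) with h | h
    · have h' : pathRel C.R (f (i - 1)) (f (i - 1 + 1)) := h
      rw [e] at h'
      exact Or.inr (Or.inl h')
    · rw [e] at h
      exact Or.inr (Or.inr (Or.inr h))
  exact nonterminal_of_two_nbrs C hne ha hb

include hm3 hinj hcol hno in
/-- the rerouted successor function is injective. -/
lemma sig_inj : ∀ a b c, sig C f a = some c → sig C f b = some c → a = b := by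
  intro a b c ha hb
  rcases sig_some_elim ha with ⟨i, hri, hai, hci⟩ | ⟨ha1, ha2, hba⟩ <;>
    rcases sig_some_elim hb with ⟨j, hrj, hbj, hcj⟩ | ⟨hb1, hb2, hbb⟩
  · rw [hci] at hcj
    cases hinj hcj
    rw [hai, hbj]
  · -- a from red edge i, b a blue predecessor of c = f i : contradiction
    exfalso
    subst hci
    have hnp : ¬ RedE C f (i - 1) := red_not_prev hno hri
    have hblue : pathRel C.B (f (i - 1)) (f i) := by
      have := blueE hcol hnp
      rw [sub_add_cancel] at this
      exact this
    have hbfi : b = f (i - 1) := blue_pred_unique C hbb hblue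
    exact (not_not_intro hnp) (fun hr => hb2 (i - 1) ⟨hr, hbfi⟩)
  · exfalso
    subst hcj
    have hnp : ¬ RedE C f (j - 1) := red_not_prev hno hrj
    have hblue : pathRel C.B (f (j - 1)) (f j) := by
      have := blueE hcol hnp
      rw [sub_add_cancel] at this
      exact this
    have hbfi : a = f (j - 1) := blue_pred_unique C hba hblue
    exact (not_not_intro hnp) (fun hr => ha2 (j - 1) ⟨hr, hbfi⟩)
  · exact blue_pred_unique C hba hbb

include hm3 hinj hcol hno in
/-- a vertex where the rerouting halts, reached by the rerouting, is in `T2`. -/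
lemma sig_good {w z : V} (hw : sig C f w = some z) (hz : sig C f z = none) :
    z ∈ C.T2 := by
  rcases sig_some_elim hw with ⟨i, hri, hwi, hzi⟩ | ⟨hc1, hc2, hblue⟩
  · -- z = f i with i red : derive a contradiction, sig z cannot be none
    exfalso
    subst hzi
    rcases sig_none_elim hz with ⟨hnb1, jj, hnred, hzf⟩ | ⟨hnb1, hnb2, hbnone⟩
    · cases hinj hzf
      exact hnred hri
    · have hnp : ¬ RedE C f (i - 1) := red_not_prev hno hri
      have hblue : pathRel C.B (f (i - 1)) (f i) := by
        have := blueE hcol hnp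
        rw [sub_add_cancel] at this
        exact this
      obtain ⟨j1, hj1⟩ := pathRel_mem_right hblue
      have hnt : f i ∉ C.T2 := fun h => cyc_nonterm hm3 hinj hcol i (T2_sub_terms C h)
      obtain ⟨v, hv⟩ := blue_succ_exists C hj1 hnt
      rw [bsucc_eq_some hv] at hbnone
      cases hbnone
  · obtain ⟨j1, hj1⟩ := pathRel_mem_right hblue
    by_cases hzt : z ∈ C.T2
    · exact hzt
    exfalso
    rcases sig_none_elim hz with ⟨hnb1, jj, hnred, hzf⟩ | ⟨hnb1, hnb2, hbnone⟩
    · by_cases hrp : RedE C f (jj - 1)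
      · exact (hnb1 (jj - 1)) ⟨hrp, by rw [sub_add_cancel]; exact hzf⟩
      · have hblue2 : pathRel C.B (f (jj - 1)) z := by
          have := blueE hcol hrp
          rw [sub_add_cancel] at this
          rw [hzf]
          exact this
        have hwfi : w = f (jj - 1) := blue_pred_unique C hblue hblue2
        exact hrp (not_not.mp (fun hr => hc2 (jj - 1) ⟨hr, hwfi⟩))
    · obtain ⟨v, hv⟩ := blue_succ_exists C hj1 hzt
      rw [bsucc_eq_some hv] at hbnone
      cases hbnone

include hm3 hinj hcol in
lemma sig_notimg {s : V} (hs : s ∈ C.S2) : ∀ w, sig C f w ≠ some s := by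
  intro w hw
  rcases sig_some_elim hw with ⟨i, hri, hwi, hsi⟩ | ⟨-, -, hblue⟩
  · exact cyc_nonterm hm3 hinj hcol i (hsi ▸ S2_sub_terms C hs)
  · exact no_blue_pred_of_S2 C hs hblue

include hm3 hinj hcol in
lemma sig_start {s : V} (hs : s ∈ C.S2) : sig C f s ≠ none := by
  classical
  have hoff : ∀ i : ZMod m, s ≠ f i := by
    intro i he
    exact cyc_nonterm hm3 hinj hcol i (he ▸ S2_sub_terms C hs)
  have hsig : sig C f s = bsucc C s := by
    unfold sig
    rw [dif_neg (fun ⟨i, _, he⟩ => hoff (i+1) he), if_neg (fun ⟨i, _, he⟩ => hoff i he)]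
  obtain ⟨j0, hj0⟩ : ∃ j0, (C.B j0).head? = some s := by
    rw [C.Bheads] at hs; exact hs
  have hmem : s ∈ C.B j0 := List.mem_of_mem_head? (by rw [hj0]; rfl)
  have hnt : s ∉ C.T2 := (Set.disjoint_left.mp (S2_disj_T2 C)) hs
  obtain ⟨v, hv⟩ := blue_succ_exists C hmem hnt
  rw [hsig, bsucc_eq_some hv]
  simp

end Cycle

end Sig

/-! ### The main rerouting argument -/

lemma main {V : Type} [Fintype V] {k : ℕ} (C : TwoCommodity V k) {m : ℕ} (f : ZMod m → V)
    (hm3 : 3 ≤ m) (hinj : Function.Injective f)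
    (hcol : ∀ i, RedE C f i ∨ pathRel C.B (f i) (f (i + 1)))
    (hno : ∀ i : ZMod m, ¬ (pathRel C.R (f i) (f (i + 1)) ∧ pathRel C.R (f (i + 1)) (f (i + 2))))
    (i0 : ZMod m) (hred0 : RedE C f i0) : False := by
  classical
  set N := Fintype.card V with hN
  -- heads of the blue paths
  have hd : ∀ j : Fin k, (C.B j).head (C.Bne j) ∈ C.S2 := by
    intro j
    rw [C.Bheads]
    exact ⟨j, (List.head?_eq_head (C.Bne j)).symm ▸ rfl⟩
  have INJ : ∀ a b c, sig C f a = some c → sig C f b = some c → a = b :=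
    sig_inj hm3 hinj hcol hno
  have hni : ∀ j : Fin k, ∀ w, sig C f w ≠ some ((C.B j).head (C.Bne j)) :=
    fun j => sig_notimg hm3 hinj hcol (hd j)
  have hhd : ∀ j j' : Fin k, j ≠ j' → (C.B j).head (C.Bne j) ≠ (C.B j').head (C.Bne j') := by
    intro j j' hne he
    refine C.Bdisj j j' hne ((C.B j).head (C.Bne j)) (List.head_mem (C.Bne j)) ?_
    rw [he]
    exact List.head_mem (C.Bne j')
  -- properties of the rerouted paths
  have h1 : ∀ i : Fin k, orb (sig C f) N ((C.B i).head (C.Bne i)) ≠ [] ∧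
      (orb (sig C f) N ((C.B i).head (C.Bne i))).Nodup ∧
      (orb (sig C f) N ((C.B i).head (C.Bne i))).Chain' (undirAdj C.R C.B) := by
    intro i
    refine ⟨orb_ne N _, orb_nodup INJ (hni i) N, orb_chain ?_ N _⟩
    intro a b h
    rcases sig_some_elim h with ⟨i', hri, rfl, rfl⟩ | ⟨-, -, hb⟩
    · exact Or.inr (Or.inl hri)
    · exact Or.inr (Or.inr (Or.inl hb))
  have h2 : ∀ i j : Fin k, i ≠ j → ∀ v, v ∈ orb (sig C f) N ((C.B i).head (C.Bne i)) →
      v ∉ orb (sig C f) N ((C.B j).head (C.Bne j)) := by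
    intro i j hne v hvi hvj
    exact orb_disjoint INJ (hni i) (hni j) (hhd i j hne) hvi hvj
  have h3 : C.S2 = {v | ∃ i, (orb (sig C f) N ((C.B i).head (C.Bne i))).head? = some v} := by
    rw [C.Bheads]
    ext v
    constructor
    · rintro ⟨i, hi⟩
      refine ⟨i, ?_⟩
      rw [orb_head?]
      rw [List.head?_eq_head (C.Bne i)] at hi
      exact hi
    · rintro ⟨i, hi⟩
      rw [orb_head?] at hi
      refine ⟨i, ?_⟩
      rw [List.head?_eq_head (C.Bne i)]
      exact hi
  -- the endpoint map
  have hhalt : ∀ j : Fin k, (ostep (sig C f))^[N] (some ((C.B j).head (C.Bne j))) = none :=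
    fun j => exists_halt INJ (hni j)
  have hlast2 : ∀ j : Fin k,
      (orb (sig C f) N ((C.B j).head (C.Bne j))).getLast (orb_ne N _) ∈ C.T2 := by
    intro j
    have hz : sig C f ((orb (sig C f) N ((C.B j).head (C.Bne j))).getLast (orb_ne N _)) = none :=
      orb_getLast_none N _ (hhalt j)
    have hzmem := List.getLast_mem (orb_ne (g := sig C f) N ((C.B j).head (C.Bne j)))
    obtain ⟨jj, -, hjj⟩ := orb_mem N _ _ hzmem
    cases jj with
    | zero =>
      exfalso
      have : (C.B j).head (C.Bne j) =
          (orb (sig C f) N ((C.B j).head (C.Bne j))).getLast (orb_ne N _) :=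
        Option.some_inj.mp hjj
      exact sig_start hm3 hinj hcol (hd j) (this ▸ hz)
    | succ jj' =>
      obtain ⟨w, -, hw⟩ := ostep_succ_some hjj
      exact sig_good hm3 hinj hcol hno hw hz
  have hLinj : Function.Injective
      (fun j : Fin k => (orb (sig C f) N ((C.B j).head (C.Bne j))).getLast (orb_ne N _)) := by
    intro j j' he
    by_contra hne
    have he' : (orb (sig C f) N ((C.B j).head (C.Bne j))).getLast (orb_ne N _) =
        (orb (sig C f) N ((C.B j').head (C.Bne j'))).getLast (orb_ne N _) := he
    refine orb_disjoint INJ (hni j) (hni j') (hhd j j' hne) (n := N) (n' := N)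
      (a := (orb (sig C f) N ((C.B j).head (C.Bne j))).getLast (orb_ne N _))
      (List.getLast_mem (orb_ne N _)) ?_
    rw [he']
    exact List.getLast_mem (orb_ne N _)
  have hrange : Set.range
      (fun j : Fin k => (orb (sig C f) N ((C.B j).head (C.Bne j))).getLast (orb_ne N _)) =
      C.T2 := by
    apply Set.eq_of_subset_of_ncard_le
    · rintro v ⟨j, rfl⟩
      exact hlast2 j
    · rw [C.cardT2, ← Set.image_univ, Set.ncard_image_of_injective _ hLinj, Set.ncard_univ,
        Nat.card_eq_fintype_card, Fintype.card_fin]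
    · exact Set.toFinite _
  have h4 : C.T2 = {v | ∃ i, (orb (sig C f) N ((C.B i).head (C.Bne i))).getLast? = some v} := by
    ext v
    constructor
    · intro hv
      rw [← hrange] at hv
      obtain ⟨j, hj⟩ := hv
      refine ⟨j, ?_⟩
      rw [List.getLast?_eq_getLast (orb_ne N _)]
      exact congrArg some hj
    · rintro ⟨i, hi⟩
      rw [List.getLast?_eq_getLast (orb_ne N _)] at hi
      have : v = (orb (sig C f) N ((C.B i).head (C.Bne i))).getLast (orb_ne N _) :=
        (Option.some_inj.mp hi).symm
      rw [← hrange]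
      exact ⟨i, this.symm⟩
  have hiff := C.Buniq (fun j => orb (sig C f) N ((C.B j).head (C.Bne j))) h1 h2 h3 h4
  -- the final contradiction
  have hnr1 : ¬ RedE C f (i0 + 1) := red_not_next hno hred0
  have hb1 : pathRel C.B (f (i0 + 1)) (f (i0 + 1 + 1)) := blueE hcol hnr1
  obtain ⟨jstar, hinfix⟩ := hb1
  obtain ⟨j, hj⟩ := (hiff (C.B jstar)).mpr ⟨jstar, rfl⟩
  have hin2 : [f (i0 + 1), f (i0 + 1 + 1)] <:+: orb (sig C f) N ((C.B j).head (C.Bne j)) := by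
    have : (fun j => orb (sig C f) N ((C.B j).head (C.Bne j))) j = C.B jstar := hj
    rw [show orb (sig C f) N ((C.B j).head (C.Bne j)) = C.B jstar from this]
    exact hinfix
  have hgp : sig C f (f (i0 + 1)) = some (f (i0 + 1 + 1)) := orb_pair N _ hin2
  have hgr : sig C f (f (i0 + 1)) = some (f i0) := sig_red hinj hred0
  rw [hgr] at hgp
  have : f i0 = f (i0 + 1 + 1) := Option.some_inj.mp hgp
  have h20 : (2 : ZMod m) = 0 := by linear_combination -(hinj this)
  exact two_ne hm3 h20

end NoBlueAux

/-- In the minimal two-commodity routing graph, the oriented graph `H̃` contains no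
blue cycle. -/
theorem stmt4 {V : Type} [Fintype V] {k : ℕ} (hk : 0 < k) (C : TwoCommodity V k) :
    ¬ BlueCycle (pathRel C.R) (pathRel C.B) := by
  rintro ⟨m, f, hm, hinj, hcol, ⟨i0, hred0⟩, hno⟩
  rcases eq_or_lt_of_le hm with hm2 | hm3
  · -- the case m = 2 : the cycle is a single red edge plus a single blue edge,
    -- contradicting edge-disjointness of the colours.
    subst hm2
    have h2 : (2 : ZMod 2) = 0 := by decide
    have e : i0 + 1 + 1 = i0 := by
      calc i0 + 1 + 1 = i0 + 2 := by ring
        _ = i0 + 0 := by rw [h2]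
        _ = i0 := add_zero _
    rcases hcol (i0 + 1) with hr | hb
    · refine hno i0 ⟨hred0, ?_⟩
      rw [show i0 + 2 = i0 + 1 + 1 by ring]
      exact hr
    · rw [e] at hb
      exact C.edgeDisj (f i0) (f (i0 + 1)) (Or.inl hred0) (Or.inr hb)
  · exact NoBlueAux.main C f (by omega) hinj hcol hno i0 hred0
end

section
/- Under the setup of the minimal two-commodity routing graph H (red paths R routing (S1,T1), blue paths B routing (S2,T2), each of size k, uniqueness and edge/vertex properties as stated), define a chain to be a directed path in the oriented graph H̃ whose edges alternate between red and blue. If H̃ contains no red cycle and no blue cycle, then every vertex of H appears at most once on any chain, i.e., every chain is a simple path. -/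
/-- A chain: a directed (not necessarily simple) path in `H̃` whose edges alternate
between red and blue. -/
def IsChainWalk {V : Type} (red blue : V → V → Prop) (l : List V) : Prop :=
  l.Chain' (fun u v => red u v ∨ blue u v) ∧
  ∀ u v w : V, [u, v, w] <:+: l → ((red u v ∧ blue v w) ∨ (blue u v ∧ red v w))

/-- If `H̃` contains no red cycle and no blue cycle, then every chain is a simple
path: no vertex appears twice on it. -/
theorem stmt5 {V : Type} [Fintype V] {k : ℕ} (hk : 0 < k) (C : TwoCommodity V k)
    (hnoblue : ¬ BlueCycle (pathRel C.R) (pathRel C.B))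
    (hnored : ¬ RedCycle (pathRel C.R) (pathRel C.B))
    (l : List V) (hl : IsChainWalk (pathRel C.R) (pathRel C.B) l) :
    l.Nodup := by
  classical
  by_contra hnd
  -- abbreviations
  have excl : ∀ u v, pathRel C.R u v → ¬ pathRel C.B u v := fun u v hr hb =>
    C.edgeDisj u v (Or.inl hr) (Or.inl hb)
  have noloop : ∀ v : V, ¬ (pathRel C.R v v ∨ pathRel C.B v v) := by
    rintro v (h | h)
    · obtain ⟨i, hi⟩ := h
      have hnd2 : [v, v].Nodup := List.Nodup.sublist hi.sublist (C.Rnd i)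
      simp at hnd2
    · obtain ⟨i, hi⟩ := h
      have hnd2 : [v, v].Nodup := List.Nodup.sublist hi.sublist (C.Bnd i)
      simp at hnd2
  have getcongr : ∀ (p q : ℕ) (hp : p < l.length) (hq : q < l.length), p = q →
      l.get ⟨p, hp⟩ = l.get ⟨q, hq⟩ := by rintro p q hp hq rfl; rfl
  have chainEdge : ∀ (p : ℕ) (h : p + 1 < l.length),
      pathRel C.R (l.get ⟨p, by omega⟩) (l.get ⟨p + 1, h⟩) ∨
      pathRel C.B (l.get ⟨p, by omega⟩) (l.get ⟨p + 1, h⟩) := by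
    intro p h
    exact List.isChain_iff_getElem.mp hl.1 p (by omega)
  have tripleInfix : ∀ (p : ℕ) (h : p + 2 < l.length),
      [l.get ⟨p, by omega⟩, l.get ⟨p + 1, by omega⟩, l.get ⟨p + 2, h⟩] <:+: l := by
    intro p h
    refine ⟨l.take p, l.drop (p + 3), ?_⟩
    have h1 : l.drop p =
        l.get ⟨p, by omega⟩ :: l.get ⟨p + 1, by omega⟩ :: l.get ⟨p + 2, h⟩ ::
          l.drop (p + 3) := by
      rw [List.drop_eq_getElem_cons (by omega), List.drop_eq_getElem_cons (by omega),
          List.drop_eq_getElem_cons (by omega)]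
      simp [List.get_eq_getElem]
    calc l.take p ++ [l.get ⟨p, by omega⟩, l.get ⟨p + 1, by omega⟩, l.get ⟨p + 2, h⟩]
            ++ l.drop (p + 3)
        = l.take p ++ l.drop p := by rw [h1]; simp
      _ = l := List.take_append_drop p l
  have tripleAlt : ∀ (p : ℕ) (h : p + 2 < l.length),
      (pathRel C.R (l.get ⟨p, by omega⟩) (l.get ⟨p + 1, by omega⟩) ∧
        pathRel C.B (l.get ⟨p + 1, by omega⟩) (l.get ⟨p + 2, h⟩)) ∨
      (pathRel C.B (l.get ⟨p, by omega⟩) (l.get ⟨p + 1, by omega⟩) ∧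
        pathRel C.R (l.get ⟨p + 1, by omega⟩) (l.get ⟨p + 2, h⟩)) := by
    intro p h
    exact hl.2 _ _ _ (tripleInfix p h)
  -- find a closest pair of duplicates
  have hP : ∃ n, 0 < n ∧ ∃ a, ∃ h : a + n < l.length,
      l.get ⟨a, by omega⟩ = l.get ⟨a + n, h⟩ := by
    rw [List.nodup_iff_injective_get] at hnd
    simp only [Function.Injective, not_forall] at hnd
    obtain ⟨i, j, hij, hne⟩ := hnd
    rcases Nat.lt_or_ge i.val j.val with h | h
    · refine ⟨j.val - i.val, by omega, i.val, by omega, ?_⟩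
      calc l.get ⟨i.val, by omega⟩ = l.get i := by congr
        _ = l.get j := hij
        _ = l.get ⟨i.val + (j.val - i.val), by omega⟩ := by
            exact getcongr _ _ j.2 (by omega) (by omega)
    · have h' : j.val < i.val := by
        rcases Nat.lt_or_ge j.val i.val with h2 | h2
        · exact h2
        · exact absurd (Fin.ext (by omega)) hne
      refine ⟨i.val - j.val, by omega, j.val, by omega, ?_⟩
      calc l.get ⟨j.val, by omega⟩ = l.get j := by congr
        _ = l.get i := hij.symm
        _ = l.get ⟨j.val + (i.val - j.val), by omega⟩ := by
            exact getcongr _ _ i.2 (by omega) (by omega)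
  set m := Nat.find hP with hmdef
  have hmpos : 0 < m := (Nat.find_spec hP).1
  obtain ⟨a, hma, heq⟩ := (Nat.find_spec hP).2
  have hmin : ∀ n, n < m → ¬ (0 < n ∧ ∃ a, ∃ h : a + n < l.length,
      l.get ⟨a, by omega⟩ = l.get ⟨a + n, h⟩) := fun n hn => Nat.find_min hP hn
  have hm2 : 2 ≤ m := by
    by_contra hcon
    have hm1 : m = 1 := by omega
    have hE := chainEdge a (by omega)
    have hEq : l.get ⟨a + 1, by omega⟩ = l.get ⟨a, by omega⟩ :=
      (getcongr _ _ (by omega) hma (by omega)).trans heq.symm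
    rw [hEq] at hE
    exact noloop _ hE
  haveI : NeZero m := ⟨by omega⟩
  haveI : Fact (1 < m) := ⟨by omega⟩
  have hvlt : ∀ i : ZMod m, a + i.val < l.length := fun i => by
    have := ZMod.val_lt i; omega
  let f : ZMod m → V := fun i => l.get ⟨a + i.val, hvlt i⟩
  have hfapp : ∀ i : ZMod m, f i = l.get ⟨a + i.val, hvlt i⟩ := fun _ => rfl
  have hinj : Function.Injective f := by
    have key : ∀ i j : ZMod m, i.val < j.val → f i ≠ f j := by
      intro i j hlt hfeq
      have hjv := ZMod.val_lt j
      refine hmin (j.val - i.val) (by omega) ⟨by omega, a + i.val, by omega, ?_⟩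
      calc l.get ⟨a + i.val, by omega⟩ = f i := (hfapp i).symm
        _ = f j := hfeq
        _ = l.get ⟨a + i.val + (j.val - i.val), by omega⟩ :=
            (hfapp j).trans (getcongr _ _ (hvlt j) (by omega) (by omega))
    intro i j hfeq
    by_contra hne
    have hvne : i.val ≠ j.val := fun h => hne (ZMod.val_injective m h)
    rcases Nat.lt_or_ge i.val j.val with h | h
    · exact key i j h hfeq
    · exact key j i (by omega) hfeq.symm
  -- successor value computations
  have hval1 : ∀ i : ZMod m, i.val ≠ m - 1 → (i + 1).val = i.val + 1 := by
    intro i h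
    rw [ZMod.val_add, ZMod.val_one]
    exact Nat.mod_eq_of_lt (by have := ZMod.val_lt i; omega)
  have hvalw : ∀ i : ZMod m, i.val = m - 1 → (i + 1).val = 0 := by
    intro i h
    rw [ZMod.val_add, ZMod.val_one, h, show m - 1 + 1 = m from by omega, Nat.mod_self]
  have hfs : ∀ (i : ZMod m) (hh : a + i.val + 1 < l.length),
      f (i + 1) = l.get ⟨a + i.val + 1, hh⟩ := by
    intro i hh
    by_cases h : i.val = m - 1
    · calc f (i + 1) = l.get ⟨a, by omega⟩ := by
            rw [hfapp]
            exact getcongr _ _ _ _ (by rw [hvalw i h]; omega)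
        _ = l.get ⟨a + m, hma⟩ := heq
        _ = l.get ⟨a + i.val + 1, hh⟩ := getcongr _ _ _ _ (by omega)
    · rw [hfapp]
      exact getcongr _ _ _ _ (by rw [hval1 i h]; omega)
  have hfs2 : ∀ (i : ZMod m), i.val ≠ m - 1 → ∀ (hh : a + i.val + 2 < l.length),
      f (i + 2) = l.get ⟨a + i.val + 2, hh⟩ := by
    intro i h hh
    have h1 : (i + 1).val = i.val + 1 := hval1 i h
    have : f (i + 1 + 1) = l.get ⟨a + (i + 1).val + 1, by omega⟩ := hfs (i + 1) (by omega)
    rw [show i + 1 + 1 = i + 2 from by rw [add_assoc, one_add_one_eq_two]] at this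
    rw [this]
    exact getcongr _ _ _ _ (by omega)
  have edgeRB : ∀ i : ZMod m, pathRel C.R (f i) (f (i + 1)) ∨ pathRel C.B (f i) (f (i + 1)) := by
    intro i
    have hilt := ZMod.val_lt i
    have hh : a + i.val + 1 < l.length := by omega
    rw [hfapp i, hfs i hh]
    exact chainEdge (a + i.val) hh
  have ALT : ∀ i : ZMod m, i.val ≠ m - 1 →
      (pathRel C.R (f i) (f (i + 1)) ∧ pathRel C.B (f (i + 1)) (f (i + 2))) ∨
      (pathRel C.B (f i) (f (i + 1)) ∧ pathRel C.R (f (i + 1)) (f (i + 2))) := by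
    intro i h
    have hilt := ZMod.val_lt i
    have hh2 : a + i.val + 2 < l.length := by omega
    rw [hfapp i, hfs i (by omega), hfs2 i h hh2]
    exact tripleAlt (a + i.val) hh2
  -- the wrap-around index
  set wi : ZMod m := ((m - 1 : ℕ) : ZMod m) with hwi
  have hwival : wi.val = m - 1 := ZMod.val_cast_of_lt (by omega)
  have hwieq : ∀ i : ZMod m, i.val = m - 1 → i = wi := by
    intro i h
    exact ZMod.val_injective m (by rw [hwival, h])
  have hwi1 : wi + 1 = 0 := by
    rw [hwi, show ((m - 1 : ℕ) : ZMod m) + 1 = ((m - 1 + 1 : ℕ) : ZMod m) from by rw [Nat.cast_add, Nat.cast_one],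
      show m - 1 + 1 = m from by omega, ZMod.natCast_self]
  have hwi2 : wi + 2 = 1 := by
    rw [show wi + 2 = wi + 1 + 1 from by rw [add_assoc, one_add_one_eq_two], hwi1, zero_add]
  have h0ne : (0 : ZMod m).val ≠ m - 1 := by rw [ZMod.val_zero]; omega
  have halt0 := ALT 0 h0ne
  simp only [zero_add] at halt0
  by_cases hcase : pathRel C.R (f wi) (f 0) ∧ pathRel C.R (f 0) (f 1)
  · -- both wrap edges red: red cycle
    apply hnored
    refine ⟨m, f, hm2, hinj, fun i => (edgeRB i).symm, ⟨1, ?_⟩, ?_⟩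
    · -- blue (f 1) (f (1+1))
      rcases halt0 with ⟨hr, hb⟩ | ⟨hb, hr⟩
      · rw [one_add_one_eq_two]
        exact hb
      · exact absurd hb (excl _ _ hcase.2)
    · rintro i ⟨hb1, hb2⟩
      by_cases h : i.val = m - 1
      · have hiw := hwieq i h
        subst hiw
        rw [hwi1] at hb1
        exact excl _ _ hcase.1 hb1
      · rcases ALT i h with ⟨hr, _⟩ | ⟨_, hr⟩
        · exact excl _ _ hr hb1
        · exact excl _ _ hr hb2
  · -- blue cycle
    apply hnoblue
    refine ⟨m, f, hm2, hinj, edgeRB, ?_, ?_⟩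
    · rcases edgeRB wi with hr | hbw
      · exact ⟨wi, hr⟩
      rcases halt0 with ⟨hr, _⟩ | ⟨_, hr⟩
      · exact ⟨0, by simpa using hr⟩
      · refine ⟨1, ?_⟩
        rw [one_add_one_eq_two]
        exact hr
    · rintro i ⟨hr1, hr2⟩
      by_cases h : i.val = m - 1
      · have hiw := hwieq i h
        subst hiw
        rw [hwi1] at hr1 hr2
        rw [hwi2] at hr2
        exact hcase ⟨hr1, hr2⟩
      · rcases ALT i h with ⟨_, hb⟩ | ⟨hb, _⟩
        · exact excl _ _ hr2 hb
        · exact excl _ _ hr1 hb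
end

section
/- Under the setup of the minimal two-commodity routing graph H with oriented version H̃ (no red or blue cycles exist), let Z be a chain, and let P be a red path or a blue path. If vertices v and v' both lie on Z and on P, and v appears before v' on Z, then v appears before v' on P. -/
/-- `u` appears (strictly) before `v` on the list `l`. -/
def Before {V : Type} (l : List V) (u v : V) : Prop :=
  ∃ i j : ℕ, i < j ∧ l[i]? = some u ∧ l[j]? = some v

section stmt6helpers
variable {V : Type}

private lemma TC_getD_pair_infix (x : V) : ∀ (l : List V) (s : ℕ), s + 1 < l.length →
    [l.getD s x, l.getD (s+1) x] <:+: l := by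
  intro l
  induction l with
  | nil => intro s hs; simp at hs
  | cons a tl ih =>
    intro s hs
    cases s with
    | zero =>
      match tl, hs with
      | b :: tl', _ => exact ⟨[], tl', by simp⟩
    | succ s =>
      simp only [List.length_cons] at hs
      have := List.infix_cons (a := a) (ih s (by omega))
      simpa using this

private lemma TC_getD_triple_infix (x : V) : ∀ (l : List V) (s : ℕ), s + 2 < l.length →
    [l.getD s x, l.getD (s+1) x, l.getD (s+2) x] <:+: l := by
  intro l
  induction l with
  | nil => intro s hs; simp at hs
  | cons a tl ih =>
    intro s hs
    cases s with
    | zero =>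
      match tl, hs with
      | b :: c :: tl', _ => exact ⟨[], tl', by simp⟩
    | succ s =>
      simp only [List.length_cons] at hs
      have := List.infix_cons (a := a) (ih s (by omega))
      simpa using this

private lemma TC_infix_pair_indexOf [DecidableEq V] {l : List V} (hnd : l.Nodup) {u w : V}
    (h : [u, w] <:+: l) : l.idxOf w = l.idxOf u + 1 := by
  obtain ⟨s, t, hst⟩ := h
  have hl : l = s ++ u :: w :: t := by rw [← hst]; simp
  subst hl
  have hus : u ∉ s := by simp [List.nodup_append] at hnd; exact fun h => (hnd.2.2 u h).1 rfl
  have hws : w ∉ s := by simp [List.nodup_append] at hnd; exact fun h => (hnd.2.2 w h).2.1 rfl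
  have hwu : w ≠ u := by intro h; subst h; simp [List.nodup_append] at hnd
  have h1 : List.idxOf u (s ++ u :: w :: t) = s.length := by
    rw [List.idxOf_append_of_notMem hus, List.idxOf_cons_self]; simp
  have h2 : List.idxOf w (s ++ u :: w :: t) = s.length + 1 := by
    rw [List.idxOf_append_of_notMem hws, List.idxOf_cons_ne _ hwu.symm,
      List.idxOf_cons_self]
  omega

private lemma TC_zmod_val_add_one {m : ℕ} (t : ZMod (m+1)) :
    (t + 1).val = if t.val = m then 0 else t.val + 1 := by
  cases m with
  | zero =>
    revert t
    rw [Nat.zero_add]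
    intro t
    have h2 : t + 1 = 0 := Subsingleton.elim _ _
    have h3 : t.val = 0 := by have := ZMod.val_lt t; omega
    rw [h2, ZMod.val_zero, if_pos h3]
  | succ m =>
    haveI : Fact (1 < m + 1 + 1) := ⟨by omega⟩
    rw [ZMod.val_add, ZMod.val_one]
    have ht := ZMod.val_lt t
    rcases eq_or_ne t.val (m+1) with h | h
    · simp [h]
    · rw [if_neg h, Nat.mod_eq_of_lt (by omega)]

private lemma TC_no_mono_cycle {k : ℕ} {Q : Fin k → List V}
    (hnd : ∀ i, (Q i).Nodup) (hdisj : ∀ i j, i ≠ j → ∀ v, v ∈ Q i → v ∉ Q j)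
    (n : ℕ) (f : ZMod (n+1) → V) (h : ∀ i, pathRel Q (f i) (f (i+1))) : False := by
  classical
  obtain ⟨i0, h0⟩ := h 0
  have key : ∀ s : ℕ, [f (s : ZMod (n+1)), f ((s : ZMod (n+1)) + 1)] <:+: Q i0 := by
    intro s
    induction s with
    | zero => simpa using h0
    | succ s ih =>
      obtain ⟨m, hm⟩ := h ((s+1 : ℕ) : ZMod (n+1))
      have hcast : ((s+1 : ℕ) : ZMod (n+1)) = (s : ZMod (n+1)) + 1 := by push_cast; ring
      have hmem1 : f ((s+1 : ℕ) : ZMod (n+1)) ∈ Q m := hm.subset (by simp)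
      have hmem2 : f ((s+1 : ℕ) : ZMod (n+1)) ∈ Q i0 := by
        rw [hcast]; exact ih.subset (by simp)
      have hmi : m = i0 := by
        by_contra hne
        exact hdisj m i0 hne _ hmem1 hmem2
      rw [← hmi]
      exact hm
  have hstep : ∀ s : ℕ, (Q i0).idxOf (f ((s+1 : ℕ) : ZMod (n+1)))
      = (Q i0).idxOf (f (s : ZMod (n+1))) + 1 := by
    intro s
    have hcast : ((s+1 : ℕ) : ZMod (n+1)) = (s : ZMod (n+1)) + 1 := by push_cast; ring
    rw [hcast]
    exact TC_infix_pair_indexOf (hnd i0) (key s)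
  have hlin : ∀ s : ℕ, (Q i0).idxOf (f (s : ZMod (n+1)))
      = (Q i0).idxOf (f (0 : ZMod (n+1))) + s := by
    intro s
    induction s with
    | zero => simp
    | succ s ih => have := hstep s; omega
  have h1 := hlin (n+1)
  have h2 : ((n+1 : ℕ) : ZMod (n+1)) = ((0 : ℕ) : ZMod (n+1)) := by
    simp [ZMod.natCast_self]
  rw [h2, Nat.cast_zero] at h1
  omega

private lemma TC_pathRel_irrefl {k : ℕ} {Q : Fin k → List V}
    (hnd : ∀ i, (Q i).Nodup) : ∀ x, ¬ pathRel Q x x := by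
  rintro x ⟨i, hinf⟩
  have h : [x, x].Nodup := List.Nodup.sublist hinf.sublist (hnd i)
  simp at h

private lemma TC_subwalk_good {n : ℕ} (r b : V → V → Prop) (f : ZMod (n+1) → V)
    (hedge : ∀ i, r (f i) (f (i+1)) ∨ b (f i) (f (i+1)))
    (hno : ∀ i, ¬ (r (f i) (f (i+1)) ∧ r (f (i+1)) (f (i+2))))
    (s : ZMod (n+1)) (d' : ℕ)
    (hclose : f (s + ((d'+1 : ℕ) : ZMod (n+1))) = f s)
    (hsus : ¬ (r (f (s + ((d' : ℕ) : ZMod (n+1)))) (f (s + ((d' : ℕ) : ZMod (n+1)) + 1))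
        ∧ r (f s) (f (s + 1))))
    (g : ZMod (d'+1) → V) (hg : ∀ t, g t = f (s + ((t.val : ℕ) : ZMod (n+1)))) :
    (∀ t, r (g t) (g (t+1)) ∨ b (g t) (g (t+1))) ∧
    (∀ t, ¬ (r (g t) (g (t+1)) ∧ r (g (t+1)) (g (t+2)))) := by
  have hshift : ∀ t : ZMod (d'+1), g (t+1) = f (s + ((t.val : ℕ) : ZMod (n+1)) + 1) := by
    intro t
    rw [hg, TC_zmod_val_add_one t]
    split_ifs with h
    · have h2 : s + ((d' : ℕ) : ZMod (n+1)) + 1 = s + ((d'+1 : ℕ) : ZMod (n+1)) := by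
        push_cast; ring
      rw [h, h2]
      simpa using hclose.symm
    · congr 1; push_cast; ring
  constructor
  · intro t
    rw [hg, hshift]
    exact hedge _
  · intro t
    rw [show (t+2 : ZMod (d'+1)) = t+1+1 from by ring, hshift (t+1), hshift t, hg t]
    rcases eq_or_ne t.val d' with h | h
    · rw [TC_zmod_val_add_one t, if_pos h, h]
      rintro ⟨h1, h2⟩
      apply hsus
      refine ⟨h1, ?_⟩
      have e1 : s + ((d' : ℕ) : ZMod (n+1)) + 1 = s + ((d'+1 : ℕ) : ZMod (n+1)) := by
        push_cast; ring
      rw [e1, hclose] at h2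
      simpa using h2
    · rw [TC_zmod_val_add_one t, if_neg h]
      have e1 : s + (((t.val+1 : ℕ)) : ZMod (n+1)) = s + ((t.val : ℕ) : ZMod (n+1)) + 1 := by
        push_cast; ring
      rw [e1, show s + ((t.val : ℕ) : ZMod (n+1)) + 1 + 1
          = s + ((t.val : ℕ) : ZMod (n+1)) + 2 from by ring]
      exact hno _

private lemma TC_extract_cycle (r b : V → V → Prop)
    (hirr_r : ∀ x, ¬ r x x) (hirr_b : ∀ x, ¬ b x x)
    (hb : ∀ (n : ℕ) (f : ZMod (n+1) → V), ¬ ∀ i, b (f i) (f (i+1))) :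
    ∀ n (f : ZMod (n+1) → V),
      (∀ i, r (f i) (f (i+1)) ∨ b (f i) (f (i+1))) →
      (∀ i, ¬ (r (f i) (f (i+1)) ∧ r (f (i+1)) (f (i+2)))) →
      BlueCycle r b := by
  intro n
  induction n using Nat.strong_induction_on with
  | _ n IH =>
  intro f hedge hno
  by_cases hinj : Function.Injective f
  · cases n with
    | zero =>
      exfalso
      have h01 : (0 + 1 : ZMod 1) = 0 := Subsingleton.elim _ _
      rcases hedge 0 with h | h
      · rw [h01] at h; exact hirr_r _ h
      · rw [h01] at h; exact hirr_b _ h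
    | succ n =>
      by_cases hre : ∃ i : ZMod (n+1+1), r (f i) (f (i+1))
      · exact ⟨n+1+1, f, by omega, hinj, hedge, hre, hno⟩
      · push_neg at hre
        exact absurd (fun i => (hedge i).resolve_left (hre i)) (hb (n+1) f)
  · obtain ⟨i, j, hfij, hij⟩ := Function.not_injective_iff.mp hinj
    have hD0 : j - i ≠ 0 := sub_ne_zero.mpr (Ne.symm hij)
    have hE0 : i - j ≠ 0 := sub_ne_zero.mpr hij
    set d := (j - i).val with hd
    set e := (i - j).val with he
    have hd1 : 1 ≤ d := by
      rcases Nat.eq_zero_or_pos d with h | h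
      · exact absurd ((ZMod.val_eq_zero _).mp h) hD0
      · omega
    have he1 : 1 ≤ e := by
      rcases Nat.eq_zero_or_pos e with h | h
      · exact absurd ((ZMod.val_eq_zero _).mp h) hE0
      · omega
    have hdn : d < n + 1 := ZMod.val_lt _
    have hen : e < n + 1 := ZMod.val_lt _
    have hcd : ((d : ℕ) : ZMod (n+1)) = j - i := by
      rw [hd, ZMod.natCast_val, ZMod.cast_id]
    have hce : ((e : ℕ) : ZMod (n+1)) = i - j := by
      rw [he, ZMod.natCast_val, ZMod.cast_id]
    by_cases hA : r (f (i + ((d-1 : ℕ) : ZMod (n+1)))) (f (i + ((d-1 : ℕ) : ZMod (n+1)) + 1))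
        ∧ r (f i) (f (i + 1))
    · have c1 : ((d - 1 : ℕ) : ZMod (n+1)) + 1 = ((d : ℕ) : ZMod (n+1)) := by
        rw [Nat.cast_sub hd1]; push_cast; ring
      have e1 : i + ((d-1 : ℕ) : ZMod (n+1)) + 1 = j := by
        rw [add_assoc, c1, hcd]; ring
      have e2 : i + ((d-1 : ℕ) : ZMod (n+1)) + 2 = j + 1 := by
        rw [show i + ((d-1 : ℕ) : ZMod (n+1)) + 2
            = i + ((d-1 : ℕ) : ZMod (n+1)) + 1 + 1 from by ring, e1]
      have hj1 : ¬ r (f j) (f (j + 1)) := by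
        have h2 := hno (i + ((d-1 : ℕ) : ZMod (n+1)))
        rw [e2, e1] at h2
        have hA1 := hA.1
        rw [e1] at hA1
        exact fun hr => h2 ⟨hA1, hr⟩
      have hclose : f (j + ((e-1+1 : ℕ) : ZMod (n+1))) = f j := by
        rw [show e-1+1 = e from by omega, hce, show j + (i - j) = i from by ring]
        exact hfij
      obtain ⟨hg1, hg2⟩ := TC_subwalk_good r b f hedge hno j (e-1) hclose
        (fun h => hj1 h.2) (fun t => f (j + ((t.val : ℕ) : ZMod (n+1)))) (fun t => rfl)
      exact IH (e-1) (by omega) _ hg1 hg2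
    · have hclose : f (i + ((d-1+1 : ℕ) : ZMod (n+1))) = f i := by
        rw [show d-1+1 = d from by omega, hcd, show i + (j - i) = j from by ring]
        exact hfij.symm
      obtain ⟨hg1, hg2⟩ := TC_subwalk_good r b f hedge hno i (d-1) hclose hA
        (fun t => f (i + ((t.val : ℕ) : ZMod (n+1)))) (fun t => rfl)
      exact IH (d-1) (by omega) _ hg1 hg2

private lemma TC_chain'_pair {R : V → V → Prop} {l : List V} (h : l.Chain' R) {u w : V}
    (hinf : [u, w] <:+: l) : R u w := by
  have := h.infix hinf
  simpa using this

private lemma TC_chain_closed (red blue : V → V → Prop)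
    (hdisj : ∀ u w, red u w → blue u w → False)
    (hirr_r : ∀ y, ¬ red y y) (hirr_b : ∀ y, ¬ blue y y)
    (hwalk_r : ∀ (n : ℕ) (f : ZMod (n+1) → V), ¬ ∀ i, red (f i) (f (i+1)))
    (hwalk_b : ∀ (n : ℕ) (f : ZMod (n+1) → V), ¬ ∀ i, blue (f i) (f (i+1)))
    (hnoblue : ¬ BlueCycle red blue) (hnored : ¬ BlueCycle blue red)
    (Z : List V) (hZch : Z.Chain' (fun u w => red u w ∨ blue u w))
    (hZalt : ∀ u y w, [u, y, w] <:+: Z → (red u y ∧ blue y w) ∨ (blue u y ∧ red y w))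
    (x : V) (zi zj : ℕ) (hlt : zi < zj) (hlen : zj < Z.length)
    (heq : Z.getD zi x = Z.getD zj x) : False := by
  rcases eq_or_lt_of_le (Nat.succ_le_of_lt hlt) with h1 | h1
  · have hedge := TC_chain'_pair hZch (TC_getD_pair_infix x Z zi (by omega))
    rw [show zi + 1 = zj from h1, ← heq] at hedge
    rcases hedge with h | h
    · exact hirr_r _ h
    · exact hirr_b _ h
  · set m := zj - zi - 1 with hm
    have hm1 : m + 1 = zj - zi := by omega
    set f : ZMod (m+1) → V := fun t => Z.getD (zi + t.val) x with hfdef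
    have hval : ∀ t : ZMod (m+1), t.val ≤ m := fun t => by
      have := ZMod.val_lt t; omega
    have hfs : ∀ t : ZMod (m+1), f t = Z.getD (zi + t.val) x := fun t => rfl
    have hf1 : ∀ t : ZMod (m+1), f (t+1) = Z.getD (zi + t.val + 1) x := by
      intro t
      rw [hfs (t+1), TC_zmod_val_add_one t]
      split_ifs with h
      · rw [h, show zi + m + 1 = zj from by omega]
        simpa using heq
      · congr 1
    have hbound : ∀ t : ZMod (m+1), zi + t.val + 1 ≤ zj := fun t => by
      have := hval t; omega
    have hedge : ∀ t : ZMod (m+1), red (f t) (f (t+1)) ∨ blue (f t) (f (t+1)) := by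
      intro t
      rw [hfs t, hf1 t]
      exact TC_chain'_pair hZch
        (TC_getD_pair_infix x Z (zi + t.val) (by have := hbound t; omega))
    have hf2 : ∀ t : ZMod (m+1), t.val < m → f (t+2) = Z.getD (zi + t.val + 2) x := by
      intro t ht
      have h1v : (t+1).val = t.val + 1 := by
        rw [TC_zmod_val_add_one t, if_neg (by omega)]
      rw [show (t+2 : ZMod (m+1)) = t+1+1 from by ring, hf1 (t+1), h1v]
      congr 1
    have halt : ∀ t : ZMod (m+1), t.val < m →
        (red (f t) (f (t+1)) ∧ blue (f (t+1)) (f (t+2))) ∨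
        (blue (f t) (f (t+1)) ∧ red (f (t+1)) (f (t+2))) := by
      intro t ht
      rw [hfs t, hf1 t, hf2 t ht]
      exact hZalt _ _ _ (TC_getD_triple_infix x Z (zi + t.val) (by have := hval t; omega))
    by_cases hw : red (Z.getD (zj - 1) x) (Z.getD zj x) ∧ red (Z.getD zi x) (Z.getD (zi+1) x)
    · apply hnored
      apply TC_extract_cycle blue red hirr_b hirr_r hwalk_r m f
      · intro t; exact (hedge t).symm
      · rintro t ⟨b1, b2⟩
        rcases lt_or_eq_of_le (hval t) with ht | ht
        · rcases halt t ht with ⟨h1, h2⟩ | ⟨h1, h2⟩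
          · exact hdisj _ _ h1 b1
          · exact hdisj _ _ h2 b2
        · have e1 : f t = Z.getD (zj-1) x := by rw [hfs t, ht]; congr 1; omega
          have e2 : f (t+1) = Z.getD zj x := by rw [hf1 t, ht]; congr 1; omega
          rw [e1, e2] at b1
          exact hdisj _ _ hw.1 b1
    · apply hnoblue
      apply TC_extract_cycle red blue hirr_r hirr_b hwalk_b m f hedge
      rintro t ⟨r1, r2⟩
      rcases lt_or_eq_of_le (hval t) with ht | ht
      · rcases halt t ht with ⟨h1, h2⟩ | ⟨h1, h2⟩
        · exact hdisj _ _ r2 h2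
        · exact hdisj _ _ r1 h1
      · apply hw
        have e1 : f t = Z.getD (zj-1) x := by rw [hfs t, ht]; congr 1; omega
        have e2 : f (t+1) = Z.getD zj x := by rw [hf1 t, ht]; congr 1; omega
        have h1v : (t+1).val = 0 := by rw [TC_zmod_val_add_one t, if_pos ht]
        have e3 : f (t+2) = Z.getD (zi+1) x := by
          rw [show (t+2 : ZMod (m+1)) = t+1+1 from by ring, hf1 (t+1), h1v]
        rw [e1, e2] at r1
        rw [e2, e3, ← heq] at r2
        exact ⟨r1, r2⟩

private lemma TC_cross_cycle (red blue : V → V → Prop)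
    (hdisj : ∀ u w, red u w → blue u w → False)
    (hirr_r : ∀ y, ¬ red y y) (hirr_b : ∀ y, ¬ blue y y)
    (hwalk_b : ∀ (n : ℕ) (f : ZMod (n+1) → V), ¬ ∀ i, blue (f i) (f (i+1)))
    (hnoblue : ¬ BlueCycle red blue)
    (Z : List V) (hZch : Z.Chain' (fun u w => red u w ∨ blue u w))
    (hZalt : ∀ u y w, [u, y, w] <:+: Z → (red u y ∧ blue y w) ∨ (blue u y ∧ red y w))
    (P : List V) (x : V)
    (hP : ∀ s, s + 1 < P.length → blue (P.getD s x) (P.getD (s+1) x))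
    (zi zj pq pp : ℕ)
    (hz : zi < zj) (hzlen : zj < Z.length)
    (hp : pq < pp) (hplen : pp < P.length)
    (hv : Z.getD zi x = P.getD pp x) (hv' : Z.getD zj x = P.getD pq x) : False := by
  set a := zj - zi with ha
  set c := pp - pq with hc
  have ha1 : 1 ≤ a := by omega
  have hc1 : 1 ≤ c := by omega
  set m := a + c - 1 with hm
  have hm1 : m + 1 = a + c := by omega
  set f : ZMod (m+1) → V := fun t =>
    if t.val ≤ a then Z.getD (zi + t.val) x else P.getD (pq + (t.val - a)) x with hfdef
  have hval : ∀ t : ZMod (m+1), t.val ≤ m := fun t => by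
    have := ZMod.val_lt t; omega
  have hfz : ∀ t : ZMod (m+1), t.val ≤ a → f t = Z.getD (zi + t.val) x := by
    intro t ht
    rw [hfdef]
    simp only
    rw [if_pos ht]
  have hfp : ∀ t : ZMod (m+1), a ≤ t.val → f t = P.getD (pq + (t.val - a)) x := by
    intro t ht
    rcases eq_or_lt_of_le ht with h | h
    · rw [hfz t (le_of_eq h.symm), ← h, show zi + a = zj from by omega,
        show pq + (a - a) = pq from by omega]
      exact hv'
    · rw [hfdef]
      simp only
      rw [if_neg (by omega)]
  have hfz1 : ∀ t : ZMod (m+1), t.val < a → f (t+1) = Z.getD (zi + t.val + 1) x := by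
    intro t ht
    have h1v : (t+1).val = t.val + 1 := by
      rw [TC_zmod_val_add_one t, if_neg (by omega)]
    rw [hfz (t+1) (by omega), h1v]
    congr 1
  have hfp1 : ∀ t : ZMod (m+1), a ≤ t.val → f (t+1) = P.getD (pq + (t.val - a) + 1) x := by
    intro t ht
    rcases eq_or_lt_of_le (hval t) with h | h
    · have h1v : (t+1).val = 0 := by rw [TC_zmod_val_add_one t, if_pos h]
      rw [hfz (t+1) (by omega), h1v, show zi + 0 = zi from by omega,
        show pq + (t.val - a) + 1 = pp from by omega]
      exact hv
    · have h1v : (t+1).val = t.val + 1 := by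
        rw [TC_zmod_val_add_one t, if_neg (by omega)]
      rw [hfp (t+1) (by omega), h1v]
      congr 1
      omega
  have hbound : ∀ t : ZMod (m+1), a ≤ t.val → pq + (t.val - a) + 1 < P.length := by
    intro t ht
    have := hval t; omega
  have hblue : ∀ t : ZMod (m+1), a ≤ t.val → blue (f t) (f (t+1)) := by
    intro t ht
    rw [hfp t ht, hfp1 t ht]
    exact hP _ (hbound t ht)
  have hedge : ∀ t : ZMod (m+1), red (f t) (f (t+1)) ∨ blue (f t) (f (t+1)) := by
    intro t
    rcases lt_or_ge t.val a with ht | ht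
    · rw [hfz t (le_of_lt ht), hfz1 t ht]
      exact TC_chain'_pair hZch (TC_getD_pair_infix x Z (zi + t.val) (by omega))
    · exact Or.inr (hblue t ht)
  apply hnoblue
  apply TC_extract_cycle red blue hirr_r hirr_b hwalk_b m f hedge
  rintro t ⟨r1, r2⟩
  rcases lt_or_ge t.val a with ht | ht
  · rcases eq_or_lt_of_le (Nat.succ_le_of_lt ht) with h2 | h2
    · have hb2 : blue (f (t+1)) (f (t+2)) := by
        rw [show (t+2 : ZMod (m+1)) = t+1+1 from by ring]
        refine hblue (t+1) ?_
        rw [TC_zmod_val_add_one t, if_neg (by omega)]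
        omega
      exact hdisj _ _ r2 hb2
    · have h1v : (t+1).val = t.val + 1 := by
        rw [TC_zmod_val_add_one t, if_neg (by omega)]
      have e1 : f t = Z.getD (zi + t.val) x := hfz t (le_of_lt ht)
      have e2 : f (t+1) = Z.getD (zi + t.val + 1) x := hfz1 t ht
      have e3 : f (t+2) = Z.getD (zi + t.val + 2) x := by
        rw [show (t+2 : ZMod (m+1)) = t+1+1 from by ring, hfz1 (t+1) (by omega), h1v]
        congr 1
      rw [e1, e2] at r1
      rw [e2, e3] at r2
      rcases hZalt _ _ _ (TC_getD_triple_infix x Z (zi + t.val) (by omega)) with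
        ⟨_, hb2⟩ | ⟨hb1, _⟩
      · exact hdisj _ _ r2 hb2
      · exact hdisj _ _ r1 hb1
  · exact hdisj _ _ r1 (hblue t ht)

end stmt6helpers

/-- If `H̃` has no red or blue cycles, `Z` is a chain, and `P` is one of the red or blue
paths, then any two vertices lying on both `Z` and `P` appear in the same order on `Z`
and on `P`. -/
theorem stmt6 {V : Type} [Fintype V] {k : ℕ} (hk : 0 < k) (C : TwoCommodity V k)
    (hnoblue : ¬ BlueCycle (pathRel C.R) (pathRel C.B))
    (hnored : ¬ RedCycle (pathRel C.R) (pathRel C.B))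
    (Z : List V) (hZ : IsChainWalk (pathRel C.R) (pathRel C.B) Z)
    (P : List V) (hP : (∃ i, P = C.R i) ∨ (∃ i, P = C.B i))
    (v v' : V) (hvP : v ∈ P) (hv'P : v' ∈ P)
    (hvZ : v ∈ Z) (hv'Z : v' ∈ Z)
    (hbef : Before Z v v') :
    Before P v v' := by
  classical
  obtain ⟨zi, zj, hzij, hz1, hz2⟩ := hbef
  rw [List.getElem?_eq_some_iff] at hz1 hz2
  obtain ⟨hzi_lt, hz1⟩ := hz1
  obtain ⟨hzj_lt, hz2⟩ := hz2
  have hzv : Z.getD zi v = v := by rw [List.getD_eq_getElem _ _ hzi_lt]; exact hz1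
  have hzv' : Z.getD zj v = v' := by rw [List.getD_eq_getElem _ _ hzj_lt]; exact hz2
  obtain ⟨p1f, hp1⟩ := List.mem_iff_get.mp hvP
  obtain ⟨p2f, hp2⟩ := List.mem_iff_get.mp hv'P
  have hPv : P.getD p1f.val v = v := by
    rw [List.getD_eq_getElem _ _ p1f.isLt]; exact hp1
  have hPv' : P.getD p2f.val v = v' := by
    rw [List.getD_eq_getElem _ _ p2f.isLt]; exact hp2
  have hdisjRB : ∀ u w, pathRel C.R u w → pathRel C.B u w → False :=
    fun u w hr hb => C.edgeDisj u w (Or.inl hr) (Or.inl hb)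
  rcases lt_trichotomy p1f.val p2f.val with hlt | heqp | hgt
  · exact ⟨p1f.val, p2f.val, hlt,
      List.getElem?_eq_some_iff.mpr ⟨p1f.isLt, hp1⟩,
      List.getElem?_eq_some_iff.mpr ⟨p2f.isLt, hp2⟩⟩
  · exfalso
    have hvv : v = v' := by
      rw [← hp1, ← hp2]
      congr 1
      exact Fin.ext heqp
    refine TC_chain_closed (pathRel C.R) (pathRel C.B) hdisjRB
      (TC_pathRel_irrefl C.Rnd) (TC_pathRel_irrefl C.Bnd)
      (TC_no_mono_cycle C.Rnd C.Rdisj) (TC_no_mono_cycle C.Bnd C.Bdisj)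
      hnoblue hnored Z hZ.1 hZ.2 v zi zj hzij hzj_lt ?_
    rw [hzv, hzv']
    exact hvv
  · exfalso
    rcases hP with ⟨i0, hPi⟩ | ⟨i0, hPi⟩
    · refine TC_cross_cycle (pathRel C.B) (pathRel C.R)
        (fun u w hb hr => hdisjRB u w hr hb)
        (TC_pathRel_irrefl C.Bnd) (TC_pathRel_irrefl C.Rnd)
        (TC_no_mono_cycle C.Rnd C.Rdisj) hnored Z
        (hZ.1.imp (fun _ _ h => Or.symm h))
        (fun u y w hinf => (hZ.2 u y w hinf).symm)
        P v ?_ zi zj p2f.val p1f.val hzij hzj_lt hgt p1f.isLt ?_ ?_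
      · intro s hs
        exact ⟨i0, by rw [← hPi]; exact TC_getD_pair_infix v P s hs⟩
      · rw [hzv, hPv]
      · rw [hzv', hPv']
    · refine TC_cross_cycle (pathRel C.R) (pathRel C.B) hdisjRB
        (TC_pathRel_irrefl C.Rnd) (TC_pathRel_irrefl C.Bnd)
        (TC_no_mono_cycle C.Bnd C.Bdisj) hnoblue Z hZ.1 hZ.2
        P v ?_ zi zj p2f.val p1f.val hzij hzj_lt hgt p1f.isLt ?_ ?_
      · intro s hs
        exact ⟨i0, by rw [← hPi]; exact TC_getD_pair_infix v P s hs⟩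
      · rw [hzv, hPv]
      · rw [hzv', hPv']
end

section
/- Let H be a graph and suppose there exist two labelings ℓ, ℓ' : V(H) → L with |L| = 2k such that: (i) every non-terminal vertex lies on exactly one of k red paths and exactly one of k blue paths; (ii) for any red path R and blue path B, two vertices on both R and B with the same ℓ-label appear in the same order on R and B; and (iii) two vertices on both R and B with the same ℓ'-label appear in opposite orders on R and B. Then the number of non-terminal vertices of H is at most 4k^4. -/
private lemma get?_eq_unique {V : Type} {l : List V} (hnd : l.Nodup) {u : V} {i j : ℕ}
    (hi : l[i]? = some u) (hj : l[j]? = some u) : i = j := by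
  rw [List.getElem?_eq_some_iff] at hi hj
  obtain ⟨hi', hiu⟩ := hi
  obtain ⟨hj', hju⟩ := hj
  have := (List.Nodup.get_inj_iff hnd (i := ⟨i, hi'⟩) (j := ⟨j, hj'⟩)).mp (by simp only [List.get_eq_getElem]; rw [hiu, hju])
  exact Fin.mk.inj_iff.mp this

private lemma before_asymm {V : Type} {l : List V} (hnd : l.Nodup) {u v : V}
    (h1 : Before l u v) (h2 : Before l v u) : False := by
  obtain ⟨i, j, hij, hi, hj⟩ := h1
  obtain ⟨i', j', hij', hi', hj'⟩ := h2
  have e1 : i = j' := get?_eq_unique hnd hi hj'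
  have e2 : j = i' := get?_eq_unique hnd hj hi'
  omega

private lemma before_total {V : Type} [DecidableEq V] {l : List V} (hnd : l.Nodup) {u v : V}
    (hu : u ∈ l) (hv : v ∈ l) (hne : u ≠ v) : Before l u v ∨ Before l v u := by
  have hiu : l[l.idxOf u]? = some u := List.getElem?_idxOf hu
  have hiv : l[l.idxOf v]? = some v := List.getElem?_idxOf hv
  have hne' : l.idxOf u ≠ l.idxOf v := by
    intro h
    apply hne
    rw [h] at hiu
    rw [hiu] at hiv
    exact Option.some.inj hiv
  rcases Nat.lt_or_ge (l.idxOf u) (l.idxOf v) with h | h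
  · exact Or.inl ⟨_, _, h, hiu, hiv⟩
  · exact Or.inr ⟨_, _, lt_of_le_of_ne h (Ne.symm hne'), hiv, hiu⟩

/-- Pigeonhole step: if every non-terminal vertex lies on exactly one of `k` red paths
and one of `k` blue paths, and two labelings `ℓ, ℓ'` into a set of `2k` labels are such
that equal `ℓ`-labels force equal relative order on a common red/blue path pair while
equal `ℓ'`-labels force opposite relative order, then there are at most `4k⁴`
non-terminal vertices. -/
theorem stmt8 {V L : Type} [Fintype V] [Fintype L] {k : ℕ}
    (hL : Fintype.card L = 2 * k)
    (W : Set V) (R B : Fin k → List V) (ℓ ℓ' : V → L)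
    (hRnd : ∀ i, (R i).Nodup) (hBnd : ∀ i, (B i).Nodup)
    (hRdisj : ∀ i j, i ≠ j → ∀ v, v ∈ R i → v ∉ R j)
    (hBdisj : ∀ i j, i ≠ j → ∀ v, v ∈ B i → v ∉ B j)
    (hcov : ∀ v ∉ W, (∃ i, v ∈ R i) ∧ (∃ j, v ∈ B j))
    (hsame : ∀ (i j : Fin k) (v v' : V),
      v ∈ R i → v ∈ B j → v' ∈ R i → v' ∈ B j → ℓ v = ℓ v' →
      (Before (R i) v v' ↔ Before (B j) v v'))
    (hopp : ∀ (i j : Fin k) (v v' : V),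
      v ∈ R i → v ∈ B j → v' ∈ R i → v' ∈ B j → ℓ' v = ℓ' v' →
      (Before (R i) v v' ↔ Before (B j) v' v)) :
    Wᶜ.ncard ≤ 4 * k ^ 4 := by
  classical
  -- map each vertex outside W to its quadruple
  set f : ↥Wᶜ → Fin k × Fin k × L × L := fun v =>
    ⟨((hcov v.1 v.2).1).choose, ((hcov v.1 v.2).2).choose, ℓ v.1, ℓ' v.1⟩ with hf
  have hinj : Function.Injective f := by
    rintro ⟨v, hv⟩ ⟨v', hv'⟩ h
    simp only [hf, Prod.mk.injEq] at h
    obtain ⟨h1, h2, h3, h4⟩ := h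
    by_contra hne
    have hne' : v ≠ v' := fun h => hne (Subtype.ext h)
    set i := ((hcov v hv).1).choose with hi
    set j := ((hcov v hv).2).choose with hj
    have hvR : v ∈ R i := ((hcov v hv).1).choose_spec
    have hvB : v ∈ B j := ((hcov v hv).2).choose_spec
    have hv'R : v' ∈ R i := by rw [h1]; exact ((hcov v' hv').1).choose_spec
    have hv'B : v' ∈ B j := by rw [h2]; exact ((hcov v' hv').2).choose_spec
    rcases before_total (hRnd i) hvR hv'R hne' with hb | hb
    · exact before_asymm (hBnd j)
        ((hsame i j v v' hvR hvB hv'R hv'B h3).mp hb)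
        ((hopp i j v v' hvR hvB hv'R hv'B h4).mp hb)
    · exact before_asymm (hBnd j)
        ((hsame i j v' v hv'R hv'B hvR hvB h3.symm).mp hb)
        ((hopp i j v' v hv'R hv'B hvR hvB h4.symm).mp hb)
  have hcard : Nat.card ↥Wᶜ ≤ Nat.card (Fin k × Fin k × L × L) :=
    Nat.card_le_card_of_injective f hinj
  have : Nat.card (Fin k × Fin k × L × L) = 4 * k ^ 4 := by
    simp [Nat.card_eq_fintype_card, Fintype.card_prod, hL]
    ring
  rw [Nat.card_coe_set_eq] at hcard
  omega
end

section
/- Let F be a graph in which the minimum cut value is at least C, i.e., for every nonempty proper subset S of V(F), |out(S)| ≥ C. Suppose each edge of a subset E'' ⊆ E(F) is independently deleted with probability at most 3/4, and all other edges are retained. Then for any fixed cut S with value λ·C (λ ≥ 1), if at least half the edges of out(S) lie outside E'' or form a matching-like independent subset E' ⊆ out(S)∩E'' of size at least |out(S)|/4 whose deletion events are mutually independent, the probability that the surviving cut has value less than |out(S)|/32 is at most e^{-λC/(12·32)}. -/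
open MeasureTheory ProbabilityTheory Classical

/-- Karger-style cut-survival bound. An abstract edge set `ε`; `cutS` is the set `out(S)`
of edges of a cut of value `λ·C` (with `C` the minimum cut value, `λ ≥ 1`); edges of
`E''` are deleted independently, each with probability at most `3/4`, and edges outside
`E''` are always retained. If at least half the edges of `out(S)` lie outside `E''`, or
some subset `E' ⊆ out(S) ∩ E''` of size at least `|out(S)|/4` exists, then the
probability that fewer than `|out(S)|/32` edges of the cut survive is at most
`exp(-λC/384)`. -/
theorem stmt12 {Ω : Type} [MeasurableSpace Ω] (μ : Measure Ω) [IsProbabilityMeasure μ]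
    {ε : Type} [Fintype ε] [DecidableEq ε]
    (D : ε → Ω → Bool) (hmeas : ∀ e, Measurable (D e))
    (hind : iIndepFun D μ)
    (E'' : Finset ε)
    (hdel : ∀ e ∈ E'', μ {ω | D e ω = true} ≤ 3 / 4)
    (hkeep : ∀ e ∉ E'', ∀ ω, D e ω = false)
    (cutS : Finset ε) (C lam : ℝ) (hC : 0 < C) (hlam : 1 ≤ lam)
    (hval : (cutS.card : ℝ) = lam * C)
    (hhyp : ((cutS \ E'').card : ℝ) ≥ (cutS.card : ℝ) / 2 ∨
      ∃ E' ⊆ cutS ∩ E'', ((E'.card : ℝ) ≥ (cutS.card : ℝ) / 4)) :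
    (μ {ω | ((cutS.filter fun e => D e ω = false).card : ℝ) <
        (cutS.card : ℝ) / 32}).toReal ≤ Real.exp (-(lam * C) / (12 * 32)) := by
  have hm0 : (0:ℝ) ≤ (cutS.card : ℝ) := Nat.cast_nonneg _
  rcases hhyp with hhalf | ⟨E', hE'sub, hE'card⟩
  · -- half the edges always survive: event is empty
    have hempty : {ω | ((cutS.filter fun e => D e ω = false).card : ℝ) <
        (cutS.card : ℝ) / 32} = ∅ := by
      ext ω
      simp only [Set.mem_setOf_eq, Set.mem_empty_iff_false, iff_false, not_lt]
      have hsub : cutS \ E'' ⊆ cutS.filter fun e => D e ω = false := by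
        intro e he
        rw [Finset.mem_sdiff] at he
        exact Finset.mem_filter.2 ⟨he.1, hkeep e he.2 ω⟩
      have := Finset.card_le_card hsub
      have h2 : ((cutS \ E'').card : ℝ) ≤
          ((cutS.filter fun e => D e ω = false).card : ℝ) := by exact_mod_cast this
      linarith
    rw [hempty]
    simp only [measure_empty, ENNReal.toReal_zero]
    positivity
  · -- Chernoff bound case
    set m : ℝ := (cutS.card : ℝ) with hm
    have hE'cut : E' ⊆ cutS := hE'sub.trans (Finset.inter_subset_left)
    have hE'E'' : E' ⊆ E'' := hE'sub.trans (Finset.inter_subset_right)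
    set t : ℝ := -(1/2) with ht
    -- indicators of survival
    set X : ε → Ω → ℝ := fun e ω => if D e ω = false then 1 else 0 with hX
    have hXind : ∀ e, X e = Set.indicator {ω | D e ω = false} (fun _ => (1:ℝ)) := by
      intro e; funext ω
      by_cases h : D e ω = false <;> simp [hX, h, Set.indicator_apply]
    have hsetmeas : ∀ e, MeasurableSet {ω | D e ω = false} := by
      intro e
      exact hmeas e (measurableSet_singleton false)
    have hXmeas : ∀ e, Measurable (X e) := by
      intro e; rw [hXind e]
      exact measurable_const.indicator (hsetmeas e)
    have hXindep : iIndepFun X μ := by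
      have := hind.comp (fun _ (b : Bool) => if b = false then (1:ℝ) else 0)
        (fun _ => Measurable.of_discrete)
      exact this
    have hXint : ∀ e, Integrable (X e) μ := by
      intro e; rw [hXind e]
      exact (integrable_const (1:ℝ)).indicator (hsetmeas e)
    -- the sum
    set S : Ω → ℝ := ∑ e ∈ E', X e with hS
    have hSapp : ∀ ω, S ω = ∑ e ∈ E', X e ω := by
      intro ω; simp [hS]
    -- event inclusion
    have hsub : {ω | ((cutS.filter fun e => D e ω = false).card : ℝ) < m / 32} ⊆
        {ω | S ω ≤ m / 32} := by
      intro ω hω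
      simp only [Set.mem_setOf_eq] at hω ⊢
      have h1 : S ω = ((E'.filter fun e => D e ω = false).card : ℝ) := by
        rw [hSapp]
        simp [hX, Finset.sum_boole]
      have h2 : (E'.filter fun e => D e ω = false).card ≤
          (cutS.filter fun e => D e ω = false).card :=
        Finset.card_le_card (Finset.filter_subset_filter _ hE'cut)
      have h2' : ((E'.filter fun e => D e ω = false).card : ℝ) ≤
          ((cutS.filter fun e => D e ω = false).card : ℝ) := by exact_mod_cast h2
      linarith
    -- integrability of exp(t * X e)
    have hexpint : ∀ e, Integrable (fun ω => Real.exp (t * X e ω)) μ := by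
      intro e
      have heq : (fun ω => Real.exp (t * X e ω)) =
          fun ω => 1 + (Real.exp t - 1) * X e ω := by
        funext ω
        by_cases h : D e ω = false <;> simp [hX, h] <;> ring_nf <;> simp
      rw [heq]
      exact (integrable_const 1).add ((hXint e).const_mul _)
    -- mgf of each indicator
    have hexp_half : Real.exp t ≤ 2/3 := by
      have h1 : (1:ℝ) + 1/2 ≤ Real.exp (1/2) := by
        have := Real.add_one_le_exp (1/2 : ℝ); linarith
      have h2 : Real.exp t = (Real.exp (1/2))⁻¹ := by
        rw [ht, ← Real.exp_neg]
      rw [h2]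
      rw [inv_le_comm₀ (Real.exp_pos _) (by norm_num)]
      linarith
    have hmgf : ∀ e ∈ E', mgf (X e) μ t ≤ Real.exp (-(1/12)) := by
      intro e he
      have hq : (1/4 : ℝ) ≤ (μ {ω | D e ω = false}).toReal := by
        have hcompl : {ω | D e ω = false} = {ω | D e ω = true}ᶜ := by
          ext ω; simp
        have hms : MeasurableSet {ω | D e ω = true} :=
          hmeas e (measurableSet_singleton true)
        have htrue' : (μ {ω | D e ω = true}).toReal ≤ 3/4 := by
          have h34 : ((3:ENNReal)/4).toReal = 3/4 := by
            rw [ENNReal.toReal_div]; norm_num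
          have := ENNReal.toReal_mono ((ENNReal.div_lt_top (by norm_num) (by norm_num)).ne)
            (hdel e (hE'E'' he))
          rw [h34] at this; exact this
        rw [hcompl, prob_compl_eq_one_sub hms,
          ENNReal.toReal_sub_of_le prob_le_one ENNReal.one_ne_top]
        simp only [ENNReal.toReal_one]
        linarith
      have hq1 : (μ {ω | D e ω = false}).toReal ≤ 1 := by
        have h := prob_le_one (μ := μ) (s := {ω | D e ω = false})
        have := ENNReal.toReal_mono ENNReal.one_ne_top h
        simpa using this
      have hmgf_eq : mgf (X e) μ t =
          1 + (Real.exp t - 1) * (μ {ω | D e ω = false}).toReal := by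
        unfold mgf
        have heq : (fun ω => Real.exp (t * X e ω)) =
            fun ω => 1 + (Real.exp t - 1) * X e ω := by
          funext ω
          by_cases h : D e ω = false <;> simp [hX, h] <;> ring_nf <;> simp
        rw [heq]
        rw [integral_add (integrable_const 1) ((hXint e).const_mul _)]
        simp only [integral_const, probReal_univ, measure_univ, ENNReal.toReal_one, smul_eq_mul, one_mul]
        rw [integral_const_mul]
        congr 1
        rw [hXind e, integral_indicator_const (1:ℝ) (hsetmeas e)]
        simp [mul_comm, Measure.real]
      rw [hmgf_eq]
      have h1112 : 1 + (Real.exp t - 1) * (μ {ω | D e ω = false}).toReal ≤ 11/12 := by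
        nlinarith [hq, hq1, hexp_half]
      have : (11/12 : ℝ) ≤ Real.exp (-(1/12)) := by
        have := Real.add_one_le_exp (-(1/12) : ℝ); linarith
      linarith
    -- Chernoff
    have hchern := measure_le_le_exp_mul_mgf (μ := μ) (X := S) (m / 32) (by norm_num : t ≤ 0)
      (hXindep.integrable_exp_mul_sum hXmeas (fun e _ => hexpint e))
    rw [hXindep.mgf_sum hXmeas] at hchern
    have hmono : (μ {ω | ((cutS.filter fun e => D e ω = false).card : ℝ) < m / 32}).toReal ≤
        (μ {ω | S ω ≤ m / 32}).toReal :=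
      ENNReal.toReal_mono (measure_ne_top μ _) (measure_mono hsub)
    have hprod : ∏ e ∈ E', mgf (X e) μ t ≤ Real.exp (-(1/12) * E'.card) := by
      calc ∏ e ∈ E', mgf (X e) μ t ≤ ∏ e ∈ E', Real.exp (-(1/12)) :=
            Finset.prod_le_prod (fun e _ => mgf_nonneg) (fun e he => hmgf e he)
        _ = Real.exp (-(1/12) * E'.card) := by
            rw [Finset.prod_const, ← Real.exp_nat_mul]; ring_nf
    have hfinal : Real.exp (-t * (m/32)) * Real.exp (-(1/12) * E'.card) ≤
        Real.exp (-(lam * C) / (12 * 32)) := by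
      rw [← Real.exp_add, Real.exp_le_exp]
      have hmn : m / 4 ≤ (E'.card : ℝ) := hE'card
      have hmpos : 0 < m := by rw [hval]; positivity
      rw [ht]
      have : -(-(1/2)) * (m/32) + -(1/12) * (E'.card : ℝ) ≤ m/64 - m/48 := by
        have : -(1/12) * (E'.card : ℝ) ≤ -(1/12) * (m/4) := by nlinarith
        linarith
      have h2 : m/64 - m/48 ≤ -(lam*C)/(12*32) := by
        rw [← hval]
        have : -(m)/(12*32) = -m/384 := by norm_num
        nlinarith
      linarith
    calc (μ {ω | ((cutS.filter fun e => D e ω = false).card : ℝ) < m / 32}).toReal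
        ≤ (μ {ω | S ω ≤ m / 32}).toReal := hmono
      _ ≤ Real.exp (-t * (m/32)) * ∏ e ∈ E', mgf (X e) μ t := hchern
      _ ≤ Real.exp (-t * (m/32)) * Real.exp (-(1/12) * E'.card) := by
          have := Real.exp_pos (-t * (m/32))
          nlinarith [hprod, Finset.prod_nonneg (fun e (_ : e ∈ E') => mgf_nonneg (X := X e) (μ := μ) (t := t))]
      _ ≤ Real.exp (-(lam * C) / (12 * 32)) := hfinal
end

section
/- Let H be a graph, F the graph obtained from H by contracting each path segment σ in a family Σ of vertex-disjoint paths covering V(H) into a single super-node v_σ, where each segment has at most L vertices and hence each super-node has degree at most O(L) when H has bounded degree. If a set U of super-nodes (images of a vertex set A ⊆ V(H), one per segment) is β-well-linked in F, then A is Ω(β/L)-well-linked in H, assuming every edge of H has congestion O(1) under the correspondence. -/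
def cutPairs {V : Type} (G : SimpleGraph V) (A : Set V) : Set (V × V) :=
  {p | G.Adj p.1 p.2 ∧ p.1 ∈ A ∧ p.2 ∈ Aᶜ}

def WellLinked {V : Type} (G : SimpleGraph V) (T : Set V) (α : ℝ) : Prop :=
  ∀ A : Set V,
    α * min ((A ∩ T).ncard : ℝ) ((Aᶜ ∩ T).ncard : ℝ) ≤ ((cutPairs G A).ncard : ℝ)

/-- Counting with bounded fibers: if `f` maps `s` into `t` and every fiber has at most
`n` elements, then `s.ncard ≤ n * t.ncard`. -/
lemma aux_ncard_le_mul {α β : Type*} {s : Set α} {t : Set β} (hs : s.Finite) (ht : t.Finite)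
    (f : α → β) (hmaps : ∀ a ∈ s, f a ∈ t) (n : ℕ)
    (hfib : ∀ b ∈ t, {a ∈ s | f a = b}.ncard ≤ n) : s.ncard ≤ n * t.ncard := by
  classical
  rw [Set.ncard_eq_toFinset_card _ hs, Set.ncard_eq_toFinset_card _ ht]
  refine Finset.card_le_mul_card_image_of_maps_to (f := f) (fun a ha => ?_) n (fun b hb => ?_)
  · simp only [Set.Finite.mem_toFinset] at ha ⊢
    exact hmaps a ha
  · simp only [Set.Finite.mem_toFinset] at hb
    have h1 : {a ∈ s | f a = b} = ↑(hs.toFinset.filter (fun a => f a = b)) := by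
      ext a; simp
    have := hfib b hb
    rwa [h1, Set.ncard_coe_finset] at this

/-- A connected induced subgraph that is split by a set `X` contains a crossing edge. -/
lemma aux_exists_cross {V : Type} (H : SimpleGraph V) (s X : Set V)
    (hconn : (H.induce s).Connected) {x y : V} (hx : x ∈ s) (hy : y ∈ s)
    (hxX : x ∈ X) (hyX : y ∉ X) :
    ∃ p q : V, H.Adj p q ∧ p ∈ s ∧ q ∈ s ∧ p ∈ X ∧ q ∉ X := by
  obtain ⟨w⟩ := hconn.preconnected ⟨x, hx⟩ ⟨y, hy⟩
  obtain ⟨d, _, hd1, hd2⟩ := w.exists_boundary_dart {a : s | (a : V) ∈ X} hxX hyX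
  have hadj : H.Adj (d.fst : V) (d.snd : V) := d.adj
  exact ⟨d.fst, d.snd, hadj, d.fst.2, d.snd.2, hd1, hd2⟩

/-- Well-linkedness transfers from the contracted graph back to the original graph.
`H` is a bounded-degree graph; its vertex set is partitioned into connected segments
`part i` of at most `L` vertices each; `F` is the graph obtained by contracting each
segment into a super-node; `A` has at most one vertex in each segment and `U` is the set
of super-nodes of segments meeting `A`. If `U` is `β`-well-linked in `F`, then `A` is
`Ω(β/L)`-well-linked in `H`. -/
theorem stmt15 :
    ∃ c : ℝ, 0 < c ∧
      ∀ (V ι : Type) (_ : Fintype V) (_ : Fintype ι)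
        (H : SimpleGraph V) (F : SimpleGraph ι) (part : ι → Set V) (L : ℕ) (β : ℝ)
        (A : Set V) (U : Set ι),
        0 < β →
        (∀ v : V, (H.neighborSet v).ncard ≤ 4) →
        (∀ i, (part i).Nonempty) →
        (∀ i, (H.induce (part i)).Connected) →
        (∀ i, (part i).ncard ≤ L) →
        (∀ i j, i ≠ j → Disjoint (part i) (part j)) →
        (∀ v : V, ∃ i, v ∈ part i) →
        (∀ i j, F.Adj i j ↔ i ≠ j ∧ ∃ u ∈ part i, ∃ v ∈ part j, H.Adj u v) →
        (∀ i, (A ∩ part i).ncard ≤ 1) →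
        U = {i | ∃ a ∈ A, a ∈ part i} →
        WellLinked F U β →
        WellLinked H A (c * β / L) := by
  classical
  refine ⟨1/8, by norm_num, ?_⟩
  intro V ι _ _ H F part L β A U hβ hdeg hne hconn hL hdisj hcover hFadj hA1 hU hWL X
  classical
  -- the index function
  set f : V → ι := fun v => (hcover v).choose with hfdef
  have hf : ∀ v : V, v ∈ part (f v) := fun v => (hcover v).choose_spec
  have hfu : ∀ (v : V) (i : ι), v ∈ part i → f v = i := by
    intro v i hv
    by_contra h
    exact (Set.disjoint_left.mp (hdisj _ _ h) (hf v)) hv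
  -- uniqueness of A-points within segments
  have hAuniq : ∀ (i : ι), ∀ a ∈ A ∩ part i, ∀ b ∈ A ∩ part i, a = b := by
    intro i
    exact (Set.ncard_le_one (Set.toFinite _)).mp (hA1 i)
  -- representative of each segment
  set rep : ι → V := fun i =>
    if h : (A ∩ part i).Nonempty then h.some else (hne i).some with hrepdef
  have hrep_mem : ∀ i, rep i ∈ part i := by
    intro i
    by_cases h : (A ∩ part i).Nonempty
    · simp only [hrepdef, dif_pos h]; exact h.some_mem.2
    · simp only [hrepdef, dif_neg h]; exact (hne i).some_mem
  have hrepU : ∀ i, i ∈ U → rep i ∈ A := by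
    intro i hi
    rw [hU] at hi
    obtain ⟨a, ha, hai⟩ := hi
    have h : (A ∩ part i).Nonempty := ⟨a, ha, hai⟩
    simp only [hrepdef, dif_pos h]; exact h.some_mem.1
  have hUrep : ∀ i, rep i ∈ A → i ∈ U := by
    intro i hi
    rw [hU]
    exact ⟨rep i, hi, hrep_mem i⟩
  have hrep_eq : ∀ a ∈ A, rep (f a) = a := by
    intro a ha
    have h : (A ∩ part (f a)).Nonempty := ⟨a, ha, hf a⟩
    have h1 : rep (f a) ∈ A ∩ part (f a) := by
      simp only [hrepdef, dif_pos h]; exact h.some_mem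
    exact hAuniq (f a) _ h1 a ⟨ha, hf a⟩
  have hfinj : Set.InjOn f A := by
    intro a ha b hb hab
    rw [← hrep_eq a ha, ← hrep_eq b hb, hab]
  -- the corresponding partition of super-nodes
  set S : Set ι := {i | rep i ∈ X} with hSdef
  have himg1 : f '' (X ∩ A) = S ∩ U := by
    ext i
    constructor
    · rintro ⟨a, ⟨haX, haA⟩, rfl⟩
      refine ⟨?_, ?_⟩
      · show rep (f a) ∈ X; rwa [hrep_eq a haA]
      · rw [hU]; exact ⟨a, haA, hf a⟩
    · rintro ⟨hiS, hiU⟩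
      have hA' := hrepU i hiU
      exact ⟨rep i, ⟨hiS, hA'⟩, hfu _ _ (hrep_mem i)⟩
  have himg2 : f '' (Xᶜ ∩ A) = Sᶜ ∩ U := by
    ext i
    constructor
    · rintro ⟨a, ⟨haX, haA⟩, rfl⟩
      refine ⟨?_, ?_⟩
      · show ¬ rep (f a) ∈ X; rwa [hrep_eq a haA]
      · rw [hU]; exact ⟨a, haA, hf a⟩
    · rintro ⟨hiS, hiU⟩
      have hA' := hrepU i hiU
      exact ⟨rep i, ⟨hiS, hA'⟩, hfu _ _ (hrep_mem i)⟩
  have hcard1 : (X ∩ A).ncard = (S ∩ U).ncard := by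
    rw [← himg1, Set.ncard_image_of_injOn (hfinj.mono Set.inter_subset_right)]
  have hcard2 : (Xᶜ ∩ A).ncard = (Sᶜ ∩ U).ncard := by
    rw [← himg2, Set.ncard_image_of_injOn (hfinj.mono Set.inter_subset_right)]
  -- trivial case: min is 0
  by_cases hm0 : min ((X ∩ A).ncard : ℝ) ((Xᶜ ∩ A).ncard : ℝ) = 0
  · rw [hm0, mul_zero]
    positivity
  -- nontrivial case
  have haN : (X ∩ A).ncard ≠ 0 := by
    intro h
    apply hm0
    rw [h]
    push_cast
    exact min_eq_left (Nat.cast_nonneg _)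
  have hbN : (Xᶜ ∩ A).ncard ≠ 0 := by
    intro h
    apply hm0
    rw [h]
    push_cast
    exact min_eq_right (Nat.cast_nonneg _)
  have hmin1 : (1 : ℝ) ≤ min ((X ∩ A).ncard : ℝ) ((Xᶜ ∩ A).ncard : ℝ) := by
    refine le_min ?_ ?_ <;> · norm_cast; omega
  -- L ≥ 1
  have hXAne : (X ∩ A).Nonempty := Set.nonempty_of_ncard_ne_zero haN
  obtain ⟨a0, _, ha0A⟩ := hXAne
  have hL1 : 1 ≤ L := by
    have h1 : 1 ≤ (part (f a0)).ncard := by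
      rw [Nat.one_le_iff_ne_zero, ← Nat.pos_iff_ne_zero]
      exact (Set.ncard_pos (Set.toFinite _)).mpr ⟨a0, hf a0⟩
    exact le_trans h1 (hL (f a0))
  -- degree bound in F
  have hdegF : ∀ k : ι, (F.neighborSet k).ncard ≤ 4 * L := by
    intro k
    -- the neighborhood of the segment in H
    set N : Set V := {v | ∃ u ∈ part k, H.Adj u v} with hNdef
    have step1 : (F.neighborSet k).ncard ≤ N.ncard := by
      set g : ι → V := fun j =>
        if h : ∃ v, v ∈ part j ∧ ∃ u ∈ part k, H.Adj u v then h.choose else (hne j).some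
        with hgdef
      have hg : ∀ j ∈ F.neighborSet k, g j ∈ part j ∧ g j ∈ N := by
        intro j hj
        have hadj : F.Adj k j := hj
        rw [hFadj] at hadj
        obtain ⟨-, u, hu, v, hv, huv⟩ := hadj
        have h : ∃ v, v ∈ part j ∧ ∃ u ∈ part k, H.Adj u v := ⟨v, hv, u, hu, huv⟩
        simp only [hgdef, dif_pos h]
        exact ⟨h.choose_spec.1, h.choose_spec.2⟩
      refine Set.ncard_le_ncard_of_injOn g (fun j hj => (hg j hj).2) ?_ (Set.toFinite _)
      intro j hj j' hj' hjj'
      have h1 : g j ∈ part j := (hg j hj).1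
      have h2 : g j' ∈ part j' := (hg j' hj').1
      rw [hjj'] at h1
      by_contra h
      exact (Set.disjoint_left.mp (hdisj _ _ h) h1) h2
    have step2 : N.ncard ≤ 4 * (part k).ncard := by
      set g' : V → V := fun v => if h : ∃ u ∈ part k, H.Adj u v then h.choose else v
        with hg'def
      refine aux_ncard_le_mul (Set.toFinite _) (Set.toFinite _) g' ?_ 4 ?_
      · intro v hv
        obtain ⟨u, hu, huv⟩ := hv
        have h : ∃ u ∈ part k, H.Adj u v := ⟨u, hu, huv⟩
        simp only [hg'def, dif_pos h]
        exact h.choose_spec.1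
      · intro u hu
        have hsub : {v ∈ N | g' v = u} ⊆ H.neighborSet u := by
          rintro v ⟨hvN, hgv⟩
          have h : ∃ u ∈ part k, H.Adj u v := hvN
          have hadj : H.Adj (g' v) v := by
            simp only [hg'def, dif_pos h]
            exact h.choose_spec.2
          rw [hgv] at hadj
          exact hadj
        exact le_trans (Set.ncard_le_ncard hsub (Set.toFinite _)) (hdeg u)
    calc (F.neighborSet k).ncard ≤ N.ncard := step1
      _ ≤ 4 * (part k).ncard := step2
      _ ≤ 4 * L := Nat.mul_le_mul_left 4 (hL k)
  -- the charging map
  have hcharge : ∀ p ∈ cutPairs F S, ∃ q : V × V,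
      q ∈ cutPairs H X ∧ (p.1 = f q.1 ∨ p.2 = f q.1) := by
    rintro ⟨i, j⟩ ⟨hadj, hiS, hjS⟩
    simp only at hadj hiS hjS
    have hiX : rep i ∈ X := hiS
    have hjX : rep j ∉ X := hjS
    rw [hFadj] at hadj
    obtain ⟨-, u, hu, v, hv, huv⟩ := hadj
    by_cases huX : u ∈ X
    · by_cases hvX : v ∈ X
      · -- segment j is split
        obtain ⟨p', q', hpq, hp's, _, hp'X, hq'X⟩ :=
          aux_exists_cross H (part j) X (hconn j) hv (hrep_mem j) hvX hjX
        exact ⟨(p', q'), ⟨hpq, hp'X, hq'X⟩, Or.inr (hfu p' j hp's).symm⟩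
      · exact ⟨(u, v), ⟨huv, huX, hvX⟩, Or.inl (hfu u i hu).symm⟩
    · -- segment i is split
      obtain ⟨p', q', hpq, hp's, _, hp'X, hq'X⟩ :=
        aux_exists_cross H (part i) X (hconn i) (hrep_mem i) hu hiX huX
      exact ⟨(p', q'), ⟨hpq, hp'X, hq'X⟩, Or.inl (hfu p' i hp's).symm⟩
  -- the well-linkedness bound in F
  have hbound := hWL S
  rw [hcard1, hcard2]
  -- main counting: cutPairs F S has size at most 8L * cutPairs H X
  by_cases hFScut : (cutPairs F S).Nonempty
  · obtain ⟨p0, hp0⟩ := hFScut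
    obtain ⟨q0, hq0, -⟩ := hcharge p0 hp0
    set Φ : ι × ι → V × V := fun p =>
      if h : ∃ q : V × V, q ∈ cutPairs H X ∧ (p.1 = f q.1 ∨ p.2 = f q.1) then h.choose else q0
      with hΦdef
    have hΦprop : ∀ p ∈ cutPairs F S,
        Φ p ∈ cutPairs H X ∧ (p.1 = f (Φ p).1 ∨ p.2 = f (Φ p).1) := by
      intro p hp
      have h := hcharge p hp
      simp only [hΦdef, dif_pos h]
      exact h.choose_spec
    have hcount : (cutPairs F S).ncard ≤ (8 * L) * (cutPairs H X).ncard := by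
      refine aux_ncard_le_mul (Set.toFinite _) (Set.toFinite _) Φ
        (fun p hp => (hΦprop p hp).1) (8 * L) ?_
      intro q hq
      set k : ι := f q.1 with hkdef
      have hsub : {p ∈ cutPairs F S | Φ p = q} ⊆
          {p ∈ cutPairs F S | p.1 = k} ∪ {p ∈ cutPairs F S | p.2 = k} := by
        rintro p ⟨hp, hΦp⟩
        rcases (hΦprop p hp).2 with h | h
        · left; exact ⟨hp, by rw [h, hΦp]⟩
        · right; exact ⟨hp, by rw [h, hΦp]⟩
      have hc1 : {p ∈ cutPairs F S | p.1 = k}.ncard ≤ (F.neighborSet k).ncard := by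
        refine Set.ncard_le_ncard_of_injOn (fun p => p.2) ?_ ?_ (Set.toFinite _)
        · rintro ⟨i, j⟩ ⟨⟨hadj, -, -⟩, h1⟩
          simp only at h1 hadj
          rw [h1] at hadj
          exact hadj
        · rintro ⟨i, j⟩ ⟨-, h1⟩ ⟨i', j'⟩ ⟨-, h1'⟩ h2
          simp only at h1 h1' h2
          rw [Prod.mk.injEq]
          exact ⟨h1.trans h1'.symm, h2⟩
      have hc2 : {p ∈ cutPairs F S | p.2 = k}.ncard ≤ (F.neighborSet k).ncard := by
        refine Set.ncard_le_ncard_of_injOn (fun p => p.1) ?_ ?_ (Set.toFinite _)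
        · rintro ⟨i, j⟩ ⟨⟨hadj, -, -⟩, h1⟩
          simp only at h1 hadj
          rw [h1] at hadj
          exact hadj.symm
        · rintro ⟨i, j⟩ ⟨-, h1⟩ ⟨i', j'⟩ ⟨-, h1'⟩ h2
          simp only at h1 h1' h2
          rw [Prod.mk.injEq]
          exact ⟨h2, h1.trans h1'.symm⟩
      calc {p ∈ cutPairs F S | Φ p = q}.ncard
          ≤ ({p ∈ cutPairs F S | p.1 = k} ∪ {p ∈ cutPairs F S | p.2 = k}).ncard :=
            Set.ncard_le_ncard hsub (Set.toFinite _)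
        _ ≤ {p ∈ cutPairs F S | p.1 = k}.ncard + {p ∈ cutPairs F S | p.2 = k}.ncard :=
            Set.ncard_union_le _ _
        _ ≤ (F.neighborSet k).ncard + (F.neighborSet k).ncard := add_le_add hc1 hc2
        _ ≤ 4 * L + 4 * L := add_le_add (hdegF k) (hdegF k)
        _ = 8 * L := by ring
    -- put it together
    have hcount' : ((cutPairs F S).ncard : ℝ) ≤ (8 * L) * ((cutPairs H X).ncard : ℝ) := by
      exact_mod_cast hcount
    have hLpos : (1 : ℝ) ≤ (L : ℝ) := by exact_mod_cast hL1
    set m : ℝ := min ((S ∩ U).ncard : ℝ) ((Sᶜ ∩ U).ncard : ℝ) with hmdef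
    have hmnn : 0 ≤ m := le_min (by positivity) (by positivity)
    have hchain : β * m ≤ (8 * L) * ((cutPairs H X).ncard : ℝ) := le_trans hbound hcount'
    rw [div_mul_eq_mul_div, div_le_iff₀ (by linarith : (0 : ℝ) < (L : ℝ))]
    nlinarith [hchain, (by positivity : (0:ℝ) ≤ ((cutPairs H X).ncard : ℝ))]
  · -- the F-cut is empty, so both sides of the F-well-linkedness are forced
    rw [Set.not_nonempty_iff_eq_empty] at hFScut
    rw [hFScut, Set.ncard_empty] at hbound
    norm_num at hbound
    have hm0' : min ((S ∩ U).ncard : ℝ) ((Sᶜ ∩ U).ncard : ℝ) = 0 := by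
      by_contra h
      have h1 : 0 < min ((S ∩ U).ncard : ℝ) ((Sᶜ ∩ U).ncard : ℝ) := by
        rcases lt_or_eq_of_le (le_min (by positivity) (by positivity) :
          (0:ℝ) ≤ min ((S ∩ U).ncard : ℝ) ((Sᶜ ∩ U).ncard : ℝ)) with h2 | h2
        · exact h2
        · exact absurd h2.symm h
      nlinarith [mul_pos hβ h1]
    rw [hcard1, hcard2] at hmin1
    rw [hm0'] at hmin1
    norm_num at hmin1
end

section
/- Let X be an α-expander on n vertices with maximum degree Δ', and let U_A, U_B ⊆ V(X) be disjoint sets with |U_A| = |U_B| = m. Then there exist at least mα/(2Δ') vertex-disjoint paths in X, each connecting a vertex of U_A to a vertex of U_B. -/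
def IsExpander {V : Type} [Fintype V] (X : SimpleGraph V) (α : ℝ) : Prop :=
  ∀ S : Set V, 2 * S.ncard ≤ Fintype.card V →
    α * (S.ncard : ℝ) ≤ ((cutPairs X S).ncard : ℝ)

set_option linter.unusedSectionVars false

namespace Stmt17
open SimpleGraph Walk

variable {V : Type} [Fintype V] [DecidableEq V]

/-- `S` separates `A` from `B` in `G`: every walk from `A` to `B` meets `S`. -/
def Sep (G : SimpleGraph V) (A B S : Set V) : Prop :=
  ∀ ⦃a b : V⦄ (p : G.Walk a b), a ∈ A → b ∈ B → ∃ s ∈ S, s ∈ p.support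

/-- A system of `k` vertex-disjoint walks from `A` to `B`. -/
structure PathSys (G : SimpleGraph V) (A B : Set V) (k : ℕ) where
  fst : Fin k → V
  lst : Fin k → V
  walk : ∀ i, G.Walk (fst i) (lst i)
  mem_A : ∀ i, fst i ∈ A
  mem_B : ∀ i, lst i ∈ B
  disj : ∀ i j, i ≠ j → ∀ v, v ∈ (walk i).support → v ∉ (walk j).support

/-- the merging map for contraction of `y` into `x` -/
def cf (x y : V) : V → V := fun v => if v = y then x else v

lemma cf_eq_self {x y v : V} (h : v ≠ y) : cf x y v = v := if_neg h
lemma cf_y {x y : V} : cf x y y = x := if_pos rfl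
lemma cf_ne_y {x y v : V} (hxy : x ≠ y) : cf x y v ≠ y := by
  unfold cf; split <;> simp_all

lemma cf_eq_iff {x y v s : V} (hs : s ≠ x) (hsy : s ≠ y) : cf x y v = s ↔ v = s := by
  unfold cf; split
  · rename_i hv
    exact iff_of_false (fun h => hs h.symm) (fun h => hsy ((h.symm.trans hv)))
  · exact Iff.rfl

lemma cf_eq_x_iff {x y v : V} : cf x y v = x ↔ v = x ∨ v = y := by
  unfold cf; split <;> simp_all

lemma cf_inj_cases {x y u w : V} (h : cf x y u = cf x y w) :
    u = w ∨ (u = x ∧ w = y) ∨ (u = y ∧ w = x) := by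
  unfold cf at h; split at h <;> split at h <;> simp_all

/-- contraction of the edge `xy` (merging `y` into `x`), as a graph on the same vertex set -/
def contract (G : SimpleGraph V) (x y : V) : SimpleGraph V where
  Adj u w := u ≠ w ∧ ∃ u' w', cf x y u' = u ∧ cf x y w' = w ∧ G.Adj u' w'
  symm := ⟨by rintro u w ⟨h, u', w', hu, hw, ha⟩; exact ⟨h.symm, w', u', hw, hu, ha.symm⟩⟩
  loopless := ⟨by rintro u ⟨h, _⟩; exact h rfl⟩

lemma contract_adj {G : SimpleGraph V} {x y u w : V} :
    (contract G x y).Adj u w ↔ u ≠ w ∧ ∃ u' w', cf x y u' = u ∧ cf x y w' = w ∧ G.Adj u' w' :=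
  Iff.rfl

/-- projection of walks to the contraction -/
lemma proj_walk (G : SimpleGraph V) (x y : V) {a b : V} (p : G.Walk a b) :
    ∃ q : (contract G x y).Walk (cf x y a) (cf x y b),
      ∀ v ∈ q.support, ∃ w ∈ p.support, cf x y w = v := by
  induction p with
  | nil => exact ⟨Walk.nil, by simp⟩
  | cons h p ih =>
    rename_i u c d
    obtain ⟨q', hq'⟩ := ih
    by_cases hm : cf x y u = cf x y c
    · refine ⟨q'.copy hm.symm rfl, ?_⟩
      intro v hv
      rw [Walk.support_copy] at hv
      obtain ⟨w, hw, hww⟩ := hq' v hv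
      exact ⟨w, by simp [hw], hww⟩
    · refine ⟨Walk.cons ⟨hm, u, c, rfl, rfl, h⟩ q', ?_⟩
      intro v hv
      rcases List.mem_cons.mp ((Walk.support_cons _ _) ▸ hv) with h1 | h1
      · exact ⟨u, by simp, h1.symm⟩
      · obtain ⟨w, hw, hww⟩ := hq' v h1
        exact ⟨w, by simp [hw], hww⟩

/-- lifting walks from the contraction -/
lemma lift_walk (G : SimpleGraph V) (x y : V) (hxy : G.Adj x y) :
    ∀ {u w : V} (p : (contract G x y).Walk u w), u ≠ y →
      ∃ (u₀ w₀ : V) (q : G.Walk u₀ w₀), cf x y u₀ = u ∧ cf x y w₀ = w ∧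
        ∀ v ∈ q.support, cf x y v ∈ p.support := by
  intro u w p
  induction p with
  | nil =>
    intro hz
    exact ⟨_, _, Walk.nil, cf_eq_self hz, cf_eq_self hz, by simp [cf_eq_self hz]⟩
  | cons h p ih =>
    rename_i a c d
    intro _
    have hc : c ≠ y := by
      obtain ⟨_, u', w', _, hw', _⟩ := h
      exact hw' ▸ cf_ne_y hxy.ne
    obtain ⟨c₀, w₀, q, hc₀, hw₀, hsub⟩ := ih hc
    obtain ⟨hne, u', c', hu', hc', hadj⟩ := id h
    have hgoal : ∀ z : V, (z = u' ∨ z = c' ∨ z = c₀ ∨ z ∈ q.support) →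
        cf x y z ∈ (Walk.cons h p).support := by
      intro z hz
      rw [Walk.support_cons, List.mem_cons]
      rcases hz with rfl | rfl | rfl | hz
      · exact Or.inl hu'
      · exact Or.inr (hc' ▸ p.start_mem_support)
      · exact Or.inr (hc₀ ▸ p.start_mem_support)
      · exact Or.inr (hsub z hz)
    have hcc : cf x y c' = cf x y c₀ := by rw [hc', hc₀]
    by_cases hcase : c' = c₀
    · subst hcase
      refine ⟨u', w₀, Walk.cons hadj q, hu', hw₀, ?_⟩
      intro z hz
      rcases List.mem_cons.mp ((Walk.support_cons _ _) ▸ hz) with rfl | h1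
      · exact hgoal z (Or.inl rfl)
      · exact hgoal z (Or.inr (Or.inr (Or.inr h1)))
    · have hadj2 : G.Adj c' c₀ := by
        rcases cf_inj_cases hcc with h1 | h1 | h1
        · exact absurd h1 hcase
        · exact h1.1 ▸ h1.2 ▸ hxy
        · exact h1.1 ▸ h1.2 ▸ hxy.symm
      refine ⟨u', w₀, Walk.cons hadj (Walk.cons hadj2 q), hu', hw₀, ?_⟩
      intro z hz
      simp only [Walk.support_cons, List.mem_cons] at hz
      rcases hz with rfl | rfl | h1
      · exact hgoal z (Or.inl rfl)
      · exact hgoal z (Or.inr (Or.inl rfl))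
      · exact hgoal z (Or.inr (Or.inr (Or.inr h1)))

open SimpleGraph Walk Set

variable {V : Type} [Fintype V] [DecidableEq V]

/-- extract an initial segment up to the first vertex in `S` -/
lemma exists_firstHit (G : SimpleGraph V) {a b : V} (p : G.Walk a b) (S : Set V)
    (h : ∃ v ∈ p.support, v ∈ S) :
    ∃ (s : V) (q : G.Walk a s), s ∈ S ∧ (∀ v ∈ q.support, v ∈ p.support) ∧
      (∀ v ∈ q.support, v ∈ S → v = s) ∧ (∀ e ∈ q.edges, e ∈ p.edges) := by
  induction p with
  | nil =>
    rename_i z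
    obtain ⟨v, hv, hvS⟩ := h
    simp only [Walk.support_nil, List.mem_singleton] at hv
    subst hv
    exact ⟨v, Walk.nil, hvS, by simp, by simp, by simp⟩
  | cons hadj p ih =>
    rename_i a c d
    by_cases ha : a ∈ S
    · refine ⟨a, Walk.nil, ha, by simp, by simp, by simp⟩
    · have h' : ∃ v ∈ p.support, v ∈ S := by
        obtain ⟨v, hv, hvS⟩ := h
        rcases List.mem_cons.mp ((Walk.support_cons _ _) ▸ hv) with rfl | hv'
        · exact absurd hvS ha
        · exact ⟨v, hv', hvS⟩
      obtain ⟨s, q, hsS, hsup, hfirst, hedge⟩ := ih h'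
      refine ⟨s, Walk.cons hadj q, hsS, ?_, ?_, ?_⟩
      · intro v hv
        rcases List.mem_cons.mp ((Walk.support_cons _ _) ▸ hv) with rfl | hv'
        · simp
        · simp [hsup v hv']
      · intro v hv hvS
        rcases List.mem_cons.mp ((Walk.support_cons _ _) ▸ hv) with rfl | hv'
        · exact absurd hvS ha
        · exact hfirst v hv' hvS
      · intro e he
        rcases List.mem_cons.mp ((Walk.edges_cons _ _) ▸ he) with rfl | he'
        · simp
        · simp [hedge e he']

lemma walk_eq_nil_of_no_edges {G : SimpleGraph V} (hG : ∀ x y : V, ¬G.Adj x y) {a b : V}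
    (p : G.Walk a b) : a = b ∧ p.support = [a] := by
  cases p with
  | nil => exact ⟨rfl, rfl⟩
  | cons h _ => exact absurd h (hG _ _)

lemma exists_inj_fin (S : Set V) (k : ℕ) (h : k ≤ S.ncard) :
    ∃ f : Fin k → V, Function.Injective f ∧ ∀ i, f i ∈ S := by
  classical
  have hfin : S.Finite := S.toFinite
  set T := hfin.toFinset with hT
  have hcard : T.card = S.ncard := by rw [ncard_eq_toFinset_card _ hfin]
  have hlen : k ≤ T.toList.length := by rwa [Finset.length_toList, hcard]
  refine ⟨fun i => T.toList.get (Fin.castLE hlen i), ?_, ?_⟩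
  · intro i j hij
    have := (List.nodup_iff_injective_get.mp T.nodup_toList) hij
    exact Fin.castLE_injective hlen this
  · intro i
    have : T.toList.get (Fin.castLE hlen i) ∈ T.toList := List.get_mem T.toList (Fin.castLE hlen i)
    rw [Finset.mem_toList] at this
    exact hfin.mem_toFinset.mp this

lemma exists_preimage_of_inj (S : Set V) (k : ℕ) (hS : S.ncard = k) (f : Fin k → V)
    (hinj : Function.Injective f) (hmem : ∀ i, f i ∈ S) : ∀ s ∈ S, ∃ i, f i = s := by
  have hsub : Set.range f ⊆ S := by rintro _ ⟨i, rfl⟩; exact hmem i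
  have hcard : S.ncard ≤ (Set.range f).ncard := by
    rw [← Set.image_univ, Set.ncard_image_of_injective _ hinj, Set.ncard_univ,
      Nat.card_eq_fintype_card, Fintype.card_fin, hS]
  have := Set.eq_of_subset_of_ncard_le hsub hcard S.toFinite
  intro s hs
  rw [← this] at hs
  exact hs

def pairs (G : SimpleGraph V) : Set (V × V) := {p : V × V | G.Adj p.1 p.2}

lemma pairs_contract_lt {G : SimpleGraph V} {x y : V} (hxy : G.Adj x y) :
    (pairs (contract G x y)).ncard < (pairs G).ncard := by
  have hxny : x ≠ y := hxy.ne
  have hsub : pairs (contract G x y) ⊆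
      (fun p : V × V => (cf x y p.1, cf x y p.2)) '' (pairs G \ {(x, y)}) := by
    rintro ⟨u, w⟩ ⟨hne, u', w', hu, hw, hadj⟩
    refine ⟨(u', w'), ⟨hadj, ?_⟩, by simp [hu, hw]⟩
    rintro h
    have h1 : u' = x := congrArg Prod.fst h
    have h2 : w' = y := congrArg Prod.snd h
    subst h1; subst h2
    apply hne
    rw [← hu, ← hw, cf_eq_self hxny, cf_y]
  calc (pairs (contract G x y)).ncard
      ≤ ((fun p : V × V => (cf x y p.1, cf x y p.2)) '' (pairs G \ {(x, y)})).ncard :=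
        Set.ncard_le_ncard hsub (Set.toFinite _)
    _ ≤ (pairs G \ {(x, y)}).ncard := Set.ncard_image_le (Set.toFinite _)
    _ < (pairs G).ncard := Set.ncard_diff_singleton_lt_of_mem hxy (Set.toFinite _)

lemma pairs_delete_lt {G : SimpleGraph V} {x y : V} (hxy : G.Adj x y) :
    (pairs (G.deleteEdges {s(x, y)})).ncard < (pairs G).ncard := by
  have hsub : pairs (G.deleteEdges {s(x, y)}) ⊆ pairs G \ {(x, y)} := by
    rintro ⟨u, w⟩ hp
    rw [pairs, Set.mem_setOf_eq, SimpleGraph.deleteEdges_adj] at hp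
    refine ⟨hp.1, ?_⟩
    rintro h
    have h1 : u = x := congrArg Prod.fst h
    have h2 : w = y := congrArg Prod.snd h
    subst h1; subst h2
    exact hp.2 (by simp)
  calc (pairs (G.deleteEdges {s(x, y)})).ncard
      ≤ (pairs G \ {(x, y)}).ncard := Set.ncard_le_ncard hsub (Set.toFinite _)
    _ < (pairs G).ncard := Set.ncard_diff_singleton_lt_of_mem hxy (Set.toFinite _)

open SimpleGraph Walk Set

lemma sep_deleteEdges {G : SimpleGraph V} {A B S : Set V} (E : Set (Sym2 V))
    (h : Sep G A B S) : Sep (G.deleteEdges E) A B S := by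
  intro a b p ha hb
  have hp : ∀ e ∈ p.edges, e ∈ G.edgeSet := fun e he =>
    (edgeSet_mono (G.deleteEdges_le E)) (p.edges_subset_edgeSet he)
  obtain ⟨s, hs, hmem⟩ := h (p.transfer G hp) ha hb
  rw [Walk.support_transfer] at hmem
  exact ⟨s, hs, hmem⟩

lemma end_not_mem_takeUntil {G : SimpleGraph V} {a e v : V} {p : G.Walk a e} (hp : p.IsPath)
    (hv : v ∈ p.support) (hne : v ≠ e) : e ∉ (p.takeUntil v hv).support := by
  intro hmem
  have hspec : (p.takeUntil v hv).append (p.dropUntil v hv) = p := p.take_spec hv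
  have hnodup := hp.support_nodup
  rw [← hspec, Walk.support_append] at hnodup
  have hdisj := List.disjoint_of_nodup_append hnodup
  have he2 : e ∈ (p.dropUntil v hv).support := (p.dropUntil v hv).end_mem_support
  rw [Walk.support_eq_cons] at he2
  rcases List.mem_cons.mp he2 with h1 | h1
  · exact hne h1.symm
  · exact hdisj hmem h1

lemma start_not_mem_dropUntil {G : SimpleGraph V} {a e v : V} {p : G.Walk a e} (hp : p.IsPath)
    (hv : v ∈ p.support) (hne : v ≠ a) : a ∉ (p.dropUntil v hv).support := by
  intro hmem
  have hspec : (p.takeUntil v hv).append (p.dropUntil v hv) = p := p.take_spec hv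
  have hnodup := hp.support_nodup
  rw [← hspec, Walk.support_append] at hnodup
  have hdisj := List.disjoint_of_nodup_append hnodup
  have ha2 : a ∈ (p.takeUntil v hv).support := (p.takeUntil v hv).start_mem_support
  rw [Walk.support_eq_cons] at hmem
  rcases List.mem_cons.mp hmem with h1 | h1
  · exact hne h1.symm
  · exact hdisj ha2 h1

/-- Combining a system of `A`–`S` walks with a system of `S`–`B` walks,
when `|S| = k` and `S` separates `A` from `B`. -/
lemma combine {G₂ : SimpleGraph V} {A B S : Set V} {k : ℕ}
    (hSk : S.ncard = k) (hsep : Sep G₂ A B S)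
    (sysA : PathSys G₂ A S k) (sysB : PathSys G₂ S B k) : Nonempty (PathSys G₂ A B k) := by
  -- refine the A-system so that each walk is a path meeting `S` exactly at its end
  have HA : ∀ i, ∃ (s : V) (q : G₂.Walk (sysA.fst i) s), s ∈ S ∧ q.IsPath ∧
      (∀ v ∈ q.support, v ∈ (sysA.walk i).support) ∧ (∀ v ∈ q.support, v ∈ S → v = s) := by
    intro i
    obtain ⟨s, q, hsS, hsup, hfirst, _⟩ := exists_firstHit G₂ (sysA.walk i) S
      ⟨sysA.lst i, (sysA.walk i).end_mem_support, sysA.mem_B i⟩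
    refine ⟨s, q.bypass, hsS, q.bypass_isPath, ?_, ?_⟩
    · exact fun v hv => hsup v (q.support_bypass_subset hv)
    · exact fun v hv hvS => hfirst v (q.support_bypass_subset hv) hvS
  choose sA qA hsA hpA hsubA hfirstA using HA
  -- refine the B-system so that each walk is a path meeting `S` exactly at its start
  have HB : ∀ j, ∃ (s : V) (q : G₂.Walk s (sysB.lst j)), s ∈ S ∧ q.IsPath ∧
      (∀ v ∈ q.support, v ∈ (sysB.walk j).support) ∧ (∀ v ∈ q.support, v ∈ S → v = s) := by
    intro j
    have hhit : ∃ v ∈ (sysB.walk j).reverse.support, v ∈ S := by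
      refine ⟨sysB.fst j, ?_, sysB.mem_A j⟩
      rw [Walk.support_reverse, List.mem_reverse]
      exact (sysB.walk j).start_mem_support
    obtain ⟨s, q, hsS, hsup, hfirst, _⟩ := exists_firstHit G₂ (sysB.walk j).reverse S hhit
    refine ⟨s, q.reverse.bypass, hsS, _root_.SimpleGraph.Walk.bypass_isPath _, ?_, ?_⟩
    · intro v hv
      have := q.reverse.support_bypass_subset hv
      rw [Walk.support_reverse, List.mem_reverse] at this
      have := hsup v this
      rwa [Walk.support_reverse, List.mem_reverse] at this
    · intro v hv hvS
      have := q.reverse.support_bypass_subset hv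
      rw [Walk.support_reverse, List.mem_reverse] at this
      exact hfirst v this hvS
  choose sB qB hsB hpB hsubB hfirstB using HB
  -- injectivity of the endpoint maps
  have hinjA : Function.Injective sA := by
    intro i j hij
    by_contra hne
    exact sysA.disj i j hne (sA i) (hsubA i _ (qA i).end_mem_support)
      (hsubA j _ (by rw [hij]; exact (qA j).end_mem_support))
  have hinjB : Function.Injective sB := by
    intro i j hij
    by_contra hne
    exact sysB.disj i j hne (sB i) (hsubB i _ (qB i).start_mem_support)
      (hsubB j _ (by rw [hij]; exact (qB j).start_mem_support))
  -- match up the endpoints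
  have hσ : ∀ i, ∃ j, sB j = sA i := fun i =>
    exists_preimage_of_inj S k hSk sB hinjB hsB (sA i) (hsA i)
  choose σ hσ using hσ
  have hσinj : Function.Injective σ := by
    intro i j hij
    apply hinjA
    rw [← hσ i, ← hσ j, hij]
  -- membership in the final walks
  have memW : ∀ (i : Fin k) v, v ∈ ((qA i).append ((qB (σ i)).copy (hσ i) rfl)).support →
      v ∈ (qA i).support ∨ v ∈ (qB (σ i)).support := by
    intro i v hv
    rw [Walk.mem_support_append_iff] at hv
    rcases hv with h | h
    · exact Or.inl h
    · rw [Walk.support_copy] at h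
      exact Or.inr h
  -- cross-disjointness
  have hcross : ∀ i j v, v ∈ (qA i).support → v ∈ (qB (σ j)).support → i = j := by
    intro i j v hvA hvB
    by_cases hvS : v ∈ S
    · have h1 : v = sA i := hfirstA i v hvA hvS
      have h2 : v = sB (σ j) := hfirstB (σ j) v hvB hvS
      apply hinjA
      rw [← h1, ← hσ j, ← h2]
    · by_contra hne
      -- build a crossing walk avoiding S
      have h1 : sA i ∉ ((qA i).takeUntil v hvA).support :=
        end_not_mem_takeUntil (hpA i) hvA (fun h => hvS (h ▸ hsA i))
      have h2 : sB (σ j) ∉ ((qB (σ j)).dropUntil v hvB).support :=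
        start_not_mem_dropUntil (hpB (σ j)) hvB (fun h => hvS (h ▸ hsB (σ j)))
      obtain ⟨s, hsS, hsmem⟩ := hsep (((qA i).takeUntil v hvA).append ((qB (σ j)).dropUntil v hvB))
        (sysA.mem_A i) (sysB.mem_B (σ j))
      rw [Walk.mem_support_append_iff] at hsmem
      rcases hsmem with h | h
      · have : s = sA i := hfirstA i s (Walk.support_takeUntil_subset _ hvA h) hsS
        exact h1 (this ▸ h)
      · have : s = sB (σ j) := hfirstB (σ j) s (Walk.support_dropUntil_subset _ hvB h) hsS
        exact h2 (this ▸ h)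
  refine ⟨⟨sysA.fst, fun i => sysB.lst (σ i),
    fun i => (qA i).append ((qB (σ i)).copy (hσ i) rfl),
    sysA.mem_A, fun i => sysB.mem_B (σ i), ?_⟩⟩
  intro i j hne v hvi hvj
  rcases memW i v hvi with h1 | h1 <;> rcases memW j v hvj with h2 | h2
  · exact sysA.disj i j hne v (hsubA i v h1) (hsubA j v h2)
  · exact hne (hcross i j v h1 h2)
  · exact hne (hcross j i v h2 h1).symm
  · exact sysB.disj (σ i) (σ j) (fun h => hne (hσinj h)) v (hsubB _ v h1) (hsubB _ v h2)

lemma support_ne_y {G : SimpleGraph V} {x y : V} (hxy : x ≠ y) {a b : V}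
    (p : (contract G x y).Walk a b) : a ≠ y → ∀ v ∈ p.support, v ≠ y := by
  induction p with
  | nil =>
    intro ha v hv
    simp only [Walk.support_nil, List.mem_singleton] at hv
    exact hv ▸ ha
  | cons h p ih =>
    rename_i u c d
    intro ha v hv
    have hc : c ≠ y := by
      obtain ⟨_, u', w', _, hw', _⟩ := h
      exact hw' ▸ cf_ne_y hxy
    rcases List.mem_cons.mp ((Walk.support_cons _ _) ▸ hv) with rfl | hv'
    · exact ha
    · exact ih hc v hv'

lemma sys_no_edges {G : SimpleGraph V} {A B : Set V} {k : ℕ} (hG : ∀ x y : V, ¬G.Adj x y)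
    (h : ∀ S, Sep G A B S → k ≤ S.ncard) : Nonempty (PathSys G A B k) := by
  have hsep : Sep G A B (A ∩ B) := by
    intro a b p ha hb
    obtain ⟨rfl, _⟩ := walk_eq_nil_of_no_edges hG p
    exact ⟨a, ⟨ha, hb⟩, p.start_mem_support⟩
  obtain ⟨f, hinj, hmem⟩ := exists_inj_fin _ _ (h _ hsep)
  refine ⟨⟨f, f, fun _ => Walk.nil, fun i => (hmem i).1, fun i => (hmem i).2, ?_⟩⟩
  intro i j hne v hvi hvj
  simp only [Walk.support_nil, List.mem_singleton] at hvi hvj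
  exact hne (hinj (hvi.symm.trans hvj))

lemma adjust_start {G : SimpleGraph V} {x y : V} (hxy : G.Adj x y) {u₀ w₀ a : V}
    (q : G.Walk u₀ w₀) (hfa : cf x y a = cf x y u₀) :
    ∃ q' : G.Walk a w₀, ∀ v ∈ q'.support, v = a ∨ v ∈ q.support := by
  by_cases h : a = u₀
  · subst h; exact ⟨q, fun v hv => Or.inr hv⟩
  · have hadj : G.Adj a u₀ := by
      rcases cf_inj_cases hfa with h1 | h1 | h1
      · exact absurd h1 h
      · exact h1.1 ▸ h1.2 ▸ hxy
      · exact h1.1 ▸ h1.2 ▸ hxy.symm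
    refine ⟨Walk.cons hadj q, ?_⟩
    intro v hv
    rcases List.mem_cons.mp ((Walk.support_cons _ _) ▸ hv) with rfl | hv'
    · exact Or.inl rfl
    · exact Or.inr hv'

lemma lift_sys {G : SimpleGraph V} {x y : V} (hxy : G.Adj x y) {A B : Set V} {k : ℕ}
    (sys : PathSys (contract G x y) (cf x y '' A) (cf x y '' B) k) :
    Nonempty (PathSys G A B k) := by
  have H : ∀ i, ∃ (a b : V) (q : G.Walk a b), a ∈ A ∧ b ∈ B ∧
      ∀ v ∈ q.support, cf x y v ∈ (sys.walk i).support := by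
    intro i
    obtain ⟨a, haA, hfa⟩ := sys.mem_A i
    obtain ⟨b, hbB, hfb⟩ := sys.mem_B i
    have hay : sys.fst i ≠ y := hfa ▸ cf_ne_y hxy.ne
    obtain ⟨u₀, w₀, q, hu₀, hw₀, hsub⟩ := lift_walk G x y hxy (sys.walk i) hay
    obtain ⟨q1, hq1⟩ := adjust_start hxy q (by rw [hfa, hu₀])
    obtain ⟨q2, hq2⟩ := adjust_start hxy q1.reverse (by rw [hfb, hw₀])
    refine ⟨a, b, q2.reverse, haA, hbB, ?_⟩
    intro v hv
    rw [Walk.support_reverse, List.mem_reverse] at hv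
    rcases hq2 v hv with rfl | hv'
    · rw [hfb]; exact (sys.walk i).end_mem_support
    · rw [Walk.support_reverse, List.mem_reverse] at hv'
      rcases hq1 v hv' with rfl | hv''
      · rw [hfa]; exact (sys.walk i).start_mem_support
      · exact hsub v hv''
  choose a b q hA hB hsub using H
  refine ⟨⟨a, b, q, hA, hB, ?_⟩⟩
  intro i j hne v hvi hvj
  exact sys.disj i j hne (cf x y v) (hsub i v hvi) (hsub j v hvj)

lemma sep_of_contract_sep {G : SimpleGraph V} {x y : V} {A B S' : Set V}
    (hx : x ∉ S') (hy : y ∉ S')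
    (hS' : Sep (contract G x y) (cf x y '' A) (cf x y '' B) S') : Sep G A B S' := by
  intro a b p ha hb
  obtain ⟨q, hq⟩ := proj_walk G x y p
  obtain ⟨s, hsS', hsupp⟩ := hS' q ⟨a, ha, rfl⟩ ⟨b, hb, rfl⟩
  obtain ⟨w, hw, hcw⟩ := hq s hsupp
  have : w = s := (cf_eq_iff (fun h => hx (by rw [← h]; exact hsS')) (fun h => hy (by rw [← h]; exact hsS'))).mp hcw
  exact ⟨s, hsS', this ▸ hw⟩

lemma sep_union_y {G : SimpleGraph V} {x y : V} (hxny : x ≠ y) {A B S' : Set V} (hx : x ∈ S')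
    (hS' : Sep (contract G x y) (cf x y '' A) (cf x y '' B) S') :
    Sep G A B (S' ∪ {y}) := by
  intro a b p ha hb
  obtain ⟨q, hq⟩ := proj_walk G x y p
  obtain ⟨s, hsS', hsupp⟩ := hS' q ⟨a, ha, rfl⟩ ⟨b, hb, rfl⟩
  obtain ⟨w, hw, hcw⟩ := hq s hsupp
  by_cases hsx : s = x
  · subst hsx
    rcases cf_eq_x_iff.mp hcw with rfl | rfl
    · exact ⟨w, Or.inl hx, hw⟩
    · exact ⟨w, Or.inr rfl, hw⟩
  · by_cases hsy : s = y
    · exact absurd (hsy ▸ hcw) (cf_ne_y hxny)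
    · have : w = s := (cf_eq_iff hsx hsy).mp hcw
      exact ⟨s, Or.inl hsS', this ▸ hw⟩

lemma sep_prefix {G : SimpleGraph V} {x y : V} (hxy : G.Adj x y) {A B S T : Set V}
    (hxS : x ∈ S) (hyS : y ∈ S) (hS : Sep G A B S)
    (hT : Sep (G.deleteEdges {s(x, y)}) A S T) : Sep G A B T := by
  intro a b p ha hb
  have hhit : ∃ v ∈ p.support, v ∈ S := by
    obtain ⟨s, hs, hmem⟩ := hS p ha hb; exact ⟨s, hmem, hs⟩
  obtain ⟨s, q, hsS, hsup, hfirst, _⟩ := exists_firstHit G p S hhit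
  have hq : ∀ e, e ∈ q.edges → ¬e ∈ ({s(x, y)} : Set (Sym2 V)) := by
    intro e he hmem
    rw [Set.mem_singleton_iff] at hmem
    subst hmem
    have h1 := hfirst x (q.fst_mem_support_of_mem_edges he) hxS
    have h2 := hfirst y (q.snd_mem_support_of_mem_edges he) hyS
    exact hxy.ne (h1.trans h2.symm)
  obtain ⟨t, htT, htsup⟩ := hT (q.toDeleteEdges _ hq) ha hsS
  rw [Walk.support_transfer] at htsup
  exact ⟨t, htT, hsup t htsup⟩

lemma sep_suffix {G : SimpleGraph V} {x y : V} (hxy : G.Adj x y) {A B S T : Set V}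
    (hxS : x ∈ S) (hyS : y ∈ S) (hS : Sep G A B S)
    (hT : Sep (G.deleteEdges {s(x, y)}) S B T) : Sep G A B T := by
  intro a b p ha hb
  have hhit : ∃ v ∈ p.reverse.support, v ∈ S := by
    obtain ⟨s, hs, hmem⟩ := hS p ha hb
    exact ⟨s, by rw [Walk.support_reverse, List.mem_reverse]; exact hmem, hs⟩
  obtain ⟨s, q, hsS, hsup, hfirst, _⟩ := exists_firstHit G p.reverse S hhit
  have hq : ∀ e, e ∈ q.edges → ¬e ∈ ({s(x, y)} : Set (Sym2 V)) := by
    intro e he hmem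
    rw [Set.mem_singleton_iff] at hmem
    subst hmem
    have h1 := hfirst x (q.fst_mem_support_of_mem_edges he) hxS
    have h2 := hfirst y (q.snd_mem_support_of_mem_edges he) hyS
    exact hxy.ne (h1.trans h2.symm)
  obtain ⟨t, htT, htsup⟩ := hT (q.toDeleteEdges _ hq).reverse hsS hb
  rw [Walk.support_reverse, List.mem_reverse, Walk.support_transfer] at htsup
  have ht2 := hsup t htsup
  rw [Walk.support_reverse, List.mem_reverse] at ht2
  exact ⟨t, htT, ht2⟩

lemma support_mapLe_eq {G H : SimpleGraph V} (hGH : G ≤ H) {u v : V} (p : G.Walk u v) :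
    (p.mapLe hGH).support = p.support := by
  induction p with
  | nil => rfl
  | cons h p ih => simp only [Walk.mapLe, Walk.map_cons, Walk.support_cons] at ih ⊢; rw [ih]

lemma sys_mono {G H : SimpleGraph V} (hGH : G ≤ H) {A B : Set V} {k : ℕ}
    (sys : PathSys G A B k) : Nonempty (PathSys H A B k) := by
  refine ⟨⟨sys.fst, sys.lst, fun i => (sys.walk i).mapLe hGH, sys.mem_A, sys.mem_B, ?_⟩⟩
  intro i j hne v hvi hvj
  rw [support_mapLe_eq] at hvi hvj
  exact sys.disj i j hne v hvi hvj

/-- Menger's theorem (hard direction). -/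
theorem menger_aux : ∀ (n : ℕ) (G : SimpleGraph V) (A B : Set V) (k : ℕ),
    (pairs G).ncard ≤ n → (∀ S : Set V, Sep G A B S → k ≤ S.ncard) →
    Nonempty (PathSys G A B k) := by
  intro n
  induction n with
  | zero =>
    intro G A B k hG h
    have hnone : ∀ x y : V, ¬G.Adj x y := by
      intro x y hxy
      have hpos : 0 < (pairs G).ncard := (Set.ncard_pos (Set.toFinite _)).mpr ⟨(x, y), hxy⟩
      omega
    exact sys_no_edges hnone h
  | succ n ih =>
    intro G A B k hG h
    by_cases hedge : ∃ x y, G.Adj x y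
    case neg =>
      push_neg at hedge
      exact sys_no_edges hedge h
    obtain ⟨x, y, hxy⟩ := hedge
    by_cases hc : ∀ S', Sep (contract G x y) (cf x y '' A) (cf x y '' B) S' → k ≤ S'.ncard
    · have hle : (pairs (contract G x y)).ncard ≤ n := by
        have := pairs_contract_lt hxy; omega
      obtain ⟨sys⟩ := ih (contract G x y) (cf x y '' A) (cf x y '' B) k hle hc
      exact lift_sys hxy sys
    · push_neg at hc
      obtain ⟨S'', hS''sep, hS''lt⟩ := hc
      have hS'sep : Sep (contract G x y) (cf x y '' A) (cf x y '' B) (S'' \ {y}) := by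
        intro a b p ha hb
        obtain ⟨s, hs, hmem⟩ := hS''sep p ha hb
        have hay : a ≠ y := by obtain ⟨a₀, _, rfl⟩ := ha; exact cf_ne_y hxy.ne
        exact ⟨s, ⟨hs, by simpa using support_ne_y hxy.ne p hay s hmem⟩, hmem⟩
      have hS'lt : (S'' \ {y}).ncard < k :=
        lt_of_le_of_lt (Set.ncard_le_ncard diff_subset (Set.toFinite _)) hS''lt
      by_cases hx : x ∈ S'' \ {y}
      case neg =>
        exfalso
        have hsepG : Sep G A B (S'' \ {y}) :=
          sep_of_contract_sep hx (by simp) hS'sep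
        exact absurd (h _ hsepG) (not_le.mpr hS'lt)
      have hSsep : Sep G A B ((S'' \ {y}) ∪ {y}) := sep_union_y hxy.ne hx hS'sep
      have hxS : x ∈ (S'' \ {y}) ∪ {y} := Or.inl hx
      have hyS : y ∈ (S'' \ {y}) ∪ {y} := Or.inr rfl
      have hkS : k ≤ ((S'' \ {y}) ∪ {y}).ncard := h _ hSsep
      have hScard : ((S'' \ {y}) ∪ {y}).ncard = k := by
        have h1 : ((S'' \ {y}) ∪ {y}).ncard ≤ (S'' \ {y}).ncard + 1 := by
          rw [Set.union_singleton]
          exact Set.ncard_insert_le _ _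
        omega
      have hG₂ : (pairs (G.deleteEdges {s(x, y)})).ncard ≤ n := by
        have := pairs_delete_lt hxy; omega
      obtain ⟨sysA⟩ := ih (G.deleteEdges {s(x, y)}) A ((S'' \ {y}) ∪ {y}) k hG₂
        (fun T hT => h T (sep_prefix hxy hxS hyS hSsep hT))
      obtain ⟨sysB⟩ := ih (G.deleteEdges {s(x, y)}) ((S'' \ {y}) ∪ {y}) B k hG₂
        (fun T hT => h T (sep_suffix hxy hxS hyS hSsep hT))
      obtain ⟨sys⟩ := combine (G₂ := G.deleteEdges {s(x, y)}) hScard (sep_deleteEdges {s(x, y)} hSsep) sysA sysB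
      exact sys_mono (G.deleteEdges_le _) sys

lemma count_pairs_fst {X : SimpleGraph V} {Δ' : ℕ} (hdeg : ∀ v, (X.neighborSet v).ncard ≤ Δ')
    (W : Set V) : {p : V × V | X.Adj p.1 p.2 ∧ p.1 ∈ W}.ncard ≤ W.ncard * Δ' := by
  classical
  set Wf := W.toFinite.toFinset with hWf
  set F := Wf.biUnion fun w => ((X.neighborSet w).toFinite.toFinset).image (fun u => (w, u))
    with hF
  have key : {p : V × V | X.Adj p.1 p.2 ∧ p.1 ∈ W} ⊆ ↑F := by
    rintro ⟨u, v⟩ ⟨hadj, hu⟩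
    refine Finset.mem_coe.mpr (Finset.mem_biUnion.mpr ⟨u, W.toFinite.mem_toFinset.mpr hu, ?_⟩)
    exact Finset.mem_image.mpr ⟨v, (X.neighborSet u).toFinite.mem_toFinset.mpr hadj, rfl⟩
  calc {p : V × V | X.Adj p.1 p.2 ∧ p.1 ∈ W}.ncard
      ≤ (↑F : Set (V × V)).ncard := Set.ncard_le_ncard key (Set.toFinite _)
    _ = F.card := Set.ncard_coe_finset _
    _ ≤ ∑ w ∈ Wf, (((X.neighborSet w).toFinite.toFinset).image (fun u => (w, u))).card :=
        Finset.card_biUnion_le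
    _ ≤ ∑ _w ∈ Wf, Δ' := by
        refine Finset.sum_le_sum fun w _ => ?_
        refine le_trans Finset.card_image_le ?_
        rw [← Set.ncard_eq_toFinset_card _ (X.neighborSet w).toFinite]
        exact hdeg w
    _ = Wf.card * Δ' := by rw [Finset.sum_const, smul_eq_mul]
    _ = W.ncard * Δ' := by rw [Set.ncard_eq_toFinset_card _ W.toFinite]

lemma count_pairs_snd {X : SimpleGraph V} {Δ' : ℕ} (hdeg : ∀ v, (X.neighborSet v).ncard ≤ Δ')
    (W : Set V) : {p : V × V | X.Adj p.1 p.2 ∧ p.2 ∈ W}.ncard ≤ W.ncard * Δ' := by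
  have himg : {p : V × V | X.Adj p.1 p.2 ∧ p.2 ∈ W} =
      Prod.swap '' {p : V × V | X.Adj p.1 p.2 ∧ p.1 ∈ W} := by
    ext ⟨u, v⟩
    constructor
    · rintro ⟨hadj, hv⟩; exact ⟨(v, u), ⟨hadj.symm, hv⟩, rfl⟩
    · rintro ⟨⟨a, b⟩, ⟨hadj, ha⟩, heq⟩
      cases heq
      exact ⟨hadj.symm, ha⟩
  rw [himg, Set.ncard_image_of_injective _ Prod.swap_injective]
  exact count_pairs_fst hdeg W

/-- vertices reachable from `A` avoiding `S` -/
def Reach (X : SimpleGraph V) (A S : Set V) : Set V :=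
  {v | v ∉ S ∧ ∃ a ∈ A, ∃ p : X.Walk a v, ∀ w ∈ p.support, w ∉ S}

lemma diff_subset_reach (X : SimpleGraph V) (A S : Set V) : A \ S ⊆ Reach X A S := by
  rintro a ⟨haA, haS⟩
  refine ⟨haS, a, haA, Walk.nil, ?_⟩
  intro w hw
  simp only [Walk.support_nil, List.mem_singleton] at hw
  exact hw ▸ haS

lemma cutPairs_reach_subset (X : SimpleGraph V) (A S : Set V) :
    cutPairs X (Reach X A S) ⊆ {p : V × V | X.Adj p.1 p.2 ∧ p.2 ∈ S} := by
  rintro ⟨u, w⟩ ⟨hadj, hu, hw⟩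
  refine ⟨hadj, ?_⟩
  by_contra hwS
  apply hw
  obtain ⟨huS, a, ha, p, hp⟩ := hu
  refine ⟨hwS, a, ha, p.concat hadj, ?_⟩
  intro v hv
  rw [Walk.support_concat, List.mem_append] at hv
  rcases hv with hv | hv
  · exact hp v hv
  · simp only [List.mem_singleton] at hv
    exact hv ▸ hwS

lemma reach_disjoint {X : SimpleGraph V} {A B S : Set V} (hsep : Sep X A B S) :
    Disjoint (Reach X A S) (Reach X B S) := by
  rw [Set.disjoint_left]
  rintro v ⟨hvS, a, ha, p, hp⟩ ⟨_, b, hb, q, hq⟩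
  obtain ⟨s, hsS, hsmem⟩ := hsep (p.append q.reverse) ha hb
  rw [Walk.mem_support_append_iff] at hsmem
  rcases hsmem with h | h
  · exact hp s h hsS
  · rw [Walk.support_reverse, List.mem_reverse] at h
    exact hq s h hsS

lemma side_ineq {X : SimpleGraph V} {α : ℝ} {Δ' m : ℕ} (hα : 0 < α)
    (hexp : IsExpander X α) (hdeg : ∀ v, (X.neighborSet v).ncard ≤ Δ')
    {W S : Set V} (hW : W.ncard = m)
    (hsmall : 2 * (Reach X W S).ncard ≤ Fintype.card V) :
    α * ((m : ℝ) - S.ncard) ≤ (Δ' : ℝ) * S.ncard := by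
  have h1 : α * ((Reach X W S).ncard : ℝ) ≤ ((cutPairs X (Reach X W S)).ncard : ℝ) :=
    hexp _ hsmall
  have h2 : (cutPairs X (Reach X W S)).ncard ≤ S.ncard * Δ' :=
    le_trans (Set.ncard_le_ncard (cutPairs_reach_subset X W S) (Set.toFinite _))
      (count_pairs_snd hdeg S)
  have h3 : m ≤ (W \ S).ncard + S.ncard := by
    rw [← hW]
    refine le_trans (Set.ncard_le_ncard (fun w hw => ?_) (Set.toFinite _))
      (Set.ncard_union_le _ _)
    by_cases h : w ∈ S
    · exact Or.inr h
    · exact Or.inl ⟨hw, h⟩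
  have h4 : (W \ S).ncard ≤ (Reach X W S).ncard :=
    Set.ncard_le_ncard (diff_subset_reach X W S) (Set.toFinite _)
  have h5 : (m : ℝ) - S.ncard ≤ ((Reach X W S).ncard : ℝ) := by
    have h6 : m ≤ (Reach X W S).ncard + S.ncard := by omega
    have h7 : (m : ℝ) ≤ ((Reach X W S).ncard : ℝ) + S.ncard := by exact_mod_cast h6
    linarith
  have h8 : ((cutPairs X (Reach X W S)).ncard : ℝ) ≤ (Δ' : ℝ) * S.ncard := by
    have : ((cutPairs X (Reach X W S)).ncard : ℝ) ≤ ((S.ncard * Δ' : ℕ) : ℝ) := by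
      exact_mod_cast h2
    push_cast at this
    linarith
  nlinarith [mul_le_mul_of_nonneg_left h5 hα.le]

lemma sep_bound {X : SimpleGraph V} {α : ℝ} {Δ' m : ℕ} (hα : 0 < α)
    (hexp : IsExpander X α) (hdeg : ∀ v, (X.neighborSet v).ncard ≤ Δ')
    {UA UB S : Set V} (hd : Disjoint UA UB) (hA : UA.ncard = m) (hB : UB.ncard = m)
    (hsep : Sep X UA UB S) : (m : ℝ) * α / (2 * Δ') ≤ (S.ncard : ℝ) := by
  by_cases hΔ : Δ' = 0
  · subst hΔ
    norm_num
  by_cases hm : m = 0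
  · subst hm
    norm_num
  have hΔpos : 0 < (Δ' : ℝ) := by exact_mod_cast Nat.pos_of_ne_zero hΔ
  have hmpos : 0 < (m : ℝ) := by exact_mod_cast Nat.pos_of_ne_zero hm
  have h2m : UA.ncard + UB.ncard ≤ Fintype.card V := by
    rw [← Set.ncard_union_eq hd (Set.toFinite _) (Set.toFinite _)]
    have := Set.ncard_le_ncard (Set.subset_univ (UA ∪ UB)) (Set.toFinite _)
    rwa [Set.ncard_univ, Nat.card_eq_fintype_card] at this
  have h2m' : 2 * UA.ncard ≤ Fintype.card V := by omega
  have hαΔ : α ≤ (Δ' : ℝ) := by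
    have h1 := hexp UA h2m'
    have hsub : cutPairs X UA ⊆ {p : V × V | X.Adj p.1 p.2 ∧ p.1 ∈ UA} := by
      rintro ⟨u, w⟩ ⟨hadj, h1, _⟩
      exact ⟨hadj, h1⟩
    have h2 : (cutPairs X UA).ncard ≤ UA.ncard * Δ' :=
      le_trans (Set.ncard_le_ncard hsub (Set.toFinite _)) (count_pairs_fst hdeg UA)
    rw [hA] at h1 h2
    have h2' : ((cutPairs X UA).ncard : ℝ) ≤ (m : ℝ) * Δ' := by exact_mod_cast h2
    have : α * m ≤ (m : ℝ) * Δ' := le_trans h1 h2'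
    nlinarith
  have hs0 : (0 : ℝ) ≤ (S.ncard : ℝ) := Nat.cast_nonneg _
  by_cases hms : m ≤ S.ncard
  · have hcast : (m : ℝ) ≤ S.ncard := by exact_mod_cast hms
    rw [div_le_iff₀ (by positivity)]
    nlinarith
  · push_neg at hms
    have hdisj := reach_disjoint hsep
    have hsum : (Reach X UA S).ncard + (Reach X UB S).ncard ≤ Fintype.card V := by
      rw [← Set.ncard_union_eq hdisj (Set.toFinite _) (Set.toFinite _)]
      have := Set.ncard_le_ncard (Set.subset_univ ((Reach X UA S) ∪ (Reach X UB S)))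
        (Set.toFinite _)
      rwa [Set.ncard_univ, Nat.card_eq_fintype_card] at this
    have hcase : 2 * (Reach X UA S).ncard ≤ Fintype.card V ∨
        2 * (Reach X UB S).ncard ≤ Fintype.card V := by omega
    have hineq : α * ((m : ℝ) - S.ncard) ≤ (Δ' : ℝ) * S.ncard := by
      rcases hcase with h | h
      · exact side_ineq hα hexp hdeg hA h
      · exact side_ineq hα hexp hdeg hB h
    rw [div_le_iff₀ (by positivity)]
    nlinarith

end Stmt17

/-- In an `α`-expander with maximum degree `Δ'`, any two disjoint vertex sets of size `m`
are joined by at least `mα/(2Δ')` vertex-disjoint paths. -/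
theorem stmt17 {V : Type} [Fintype V] (X : SimpleGraph V) (α : ℝ) (Δ' m : ℕ)
    (hα : 0 < α) (hexp : IsExpander X α)
    (hdeg : ∀ v : V, (X.neighborSet v).ncard ≤ Δ')
    (UA UB : Set V) (hd : Disjoint UA UB)
    (hA : UA.ncard = m) (hB : UB.ncard = m) :
    ∃ (t : ℕ) (P : Fin t → List V),
      ((m : ℝ) * α / (2 * Δ') ≤ t) ∧
      (∀ i, P i ≠ [] ∧ (P i).Chain' X.Adj ∧ (P i).Nodup ∧
        (∃ a, (P i).head? = some a ∧ a ∈ UA) ∧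
        (∃ b, (P i).getLast? = some b ∧ b ∈ UB)) ∧
      (∀ i j, i ≠ j → ∀ v, v ∈ P i → v ∉ P j) := by
  classical
  set k := ⌈(m : ℝ) * α / (2 * Δ')⌉₊ with hk
  have hsep : ∀ S : Set V, Stmt17.Sep X UA UB S → k ≤ S.ncard := fun S hS =>
    Nat.ceil_le.mpr (Stmt17.sep_bound hα hexp hdeg hd hA hB hS)
  obtain ⟨sys⟩ := Stmt17.menger_aux ((Stmt17.pairs X).ncard) X UA UB k le_rfl hsep
  refine ⟨k, fun i => ((sys.walk i).bypass).support, Nat.le_ceil _, ?_, ?_⟩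
  · intro i
    refine ⟨SimpleGraph.Walk.support_ne_nil _, SimpleGraph.Walk.isChain_adj_support _,
      ((sys.walk i).bypass_isPath).support_nodup, ?_, ?_⟩
    · refine ⟨sys.fst i, ?_, sys.mem_A i⟩
      show ((sys.walk i).bypass.support).head? = some (sys.fst i)
      rw [SimpleGraph.Walk.support_eq_cons]
      rfl
    · have h1 : ((sys.walk i).bypass.reverse).support.head? = some (sys.lst i) := by
        rw [SimpleGraph.Walk.support_eq_cons]
        rfl
      rw [SimpleGraph.Walk.support_reverse, List.head?_reverse] at h1
      exact ⟨sys.lst i, h1, sys.mem_B i⟩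
  · intro i j hne v hvi hvj
    exact sys.disj i j hne v ((sys.walk i).support_bypass_subset hvi)
      ((sys.walk j).support_bypass_subset hvj)
end
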